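/- arXiv:1603.06460 — 10 statements merged into one kernel-verified Lean document; each statement's English description precedes it below -/
import Mathlib

section
/- With the right quotient-set semi-action ⇀ defined by m ⇀ gG₀ = g_{m₀,m} g • m₀, for each m ∈ M and each g ∈ G there exists g₀ ∈ G₀ such that for every coset 𝔤' ∈ G/G₀ we have m ⇀ (g·𝔤') = (m ⇀ gG₀) ⇀ (g₀·𝔤'), where g·𝔤' denotes the left multiplication action of G on G/G₀. -/
theorem stmt1 {G M : Type*} [Group G] [MulAction G M]
    (htrans : ∀ m mp : M, ∃ g : G, g • m = mp)
    (m₀ : M) (gg : M → G) (hgg : ∀ m, gg m • m₀ = m)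
    (ρ : M → G ⧸ MulAction.stabilizer G m₀ → M)
    (hρ : ∀ (m : M) (g : G), ρ m (g : G ⧸ MulAction.stabilizer G m₀) = (gg m * g) • m₀) :
    ∀ (m : M) (g : G), ∃ g₀ ∈ MulAction.stabilizer G m₀,
      ∀ 𝔤' : G ⧸ MulAction.stabilizer G m₀,
        ρ m (g • 𝔤') = ρ (ρ m (g : G ⧸ MulAction.stabilizer G m₀)) (g₀ • 𝔤') := by
  intro m g
  set m' := (gg m * g) • m₀ with hm'
  refine ⟨(gg m')⁻¹ * (gg m * g), ?_, ?_⟩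
  · show ((gg m')⁻¹ * (gg m * g)) • m₀ = m₀
    rw [mul_smul, ← hm', inv_smul_eq_iff, hgg]
  · intro 𝔤'
    induction 𝔤' using Quotient.inductionOn with
    | h g' =>
      have h1 : (g • (g' : G ⧸ MulAction.stabilizer G m₀))
          = ((g * g' : G) : G ⧸ MulAction.stabilizer G m₀) := rfl
      have h2 : (((gg m')⁻¹ * (gg m * g)) • (g' : G ⧸ MulAction.stabilizer G m₀))
          = (((gg m')⁻¹ * (gg m * g) * g' : G) : G ⧸ MulAction.stabilizer G m₀) := rfl
      rw [h1, hρ, hρ m g, ← hm', h2, hρ]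
      simp [mul_assoc]
end

section
/- Let m ∈ M, and let E, E' be subsets of G/G₀. Then there exists a subset E'' of G/G₀ with (m ⇀ E) ⇀ E' = m ⇀ E'' (where A ⇀ S := {a ⇀ s : a ∈ A, s ∈ S}); moreover if G₀ ∈ E ∩ E' then G₀ ∈ E'', and if E and E' are finite then |E''| ≤ |E| · |E'|. -/
theorem stmt5 {G M : Type*} [Group G] [MulAction G M]
    (htrans : ∀ m mp : M, ∃ g : G, g • m = mp)
    (m₀ : M) (gg : M → G) (hgg : ∀ m, gg m • m₀ = m)
    (ρ : M → G ⧸ MulAction.stabilizer G m₀ → M)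
    (hρ : ∀ (m : M) (g : G), ρ m (g : G ⧸ MulAction.stabilizer G m₀) = (gg m * g) • m₀)
    (m : M) (E E' : Set (G ⧸ MulAction.stabilizer G m₀)) :
    ∃ E'' : Set (G ⧸ MulAction.stabilizer G m₀),
      Set.image2 ρ (ρ m '' E) E' = ρ m '' E'' ∧
      (((1 : G) : G ⧸ MulAction.stabilizer G m₀) ∈ E ∩ E' →
        ((1 : G) : G ⧸ MulAction.stabilizer G m₀) ∈ E'') ∧
      (E.Finite → E'.Finite → E''.Finite ∧ E''.ncard ≤ E.ncard * E'.ncard) := by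
  have hbij : Function.Bijective (ρ m) := by
    constructor
    · intro x y hxy
      induction x using Quotient.inductionOn' with
      | h g =>
      induction y using Quotient.inductionOn' with
      | h g' =>
      have hx : (Quotient.mk'' g : G ⧸ MulAction.stabilizer G m₀) = (g : G ⧸ MulAction.stabilizer G m₀) := rfl
      have hy : (Quotient.mk'' g' : G ⧸ MulAction.stabilizer G m₀) = (g' : G ⧸ MulAction.stabilizer G m₀) := rfl
      rw [hx, hy, hρ, hρ] at hxy
      rw [hx, hy]
      rw [QuotientGroup.eq]
      simp only [MulAction.mem_stabilizer_iff]
      have : g • m₀ = g' • m₀ := by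
        have := hxy
        rw [mul_smul, mul_smul] at this
        exact smul_left_cancel _ this
      rw [mul_smul, inv_smul_eq_iff, this]
    · intro p
      refine ⟨((gg m)⁻¹ * gg p : G), ?_⟩
      rw [hρ, mul_inv_cancel_left, hgg]
  refine ⟨(ρ m) ⁻¹' (Set.image2 ρ (ρ m '' E) E'), ?_, ?_, ?_⟩
  · rw [Set.image_preimage_eq _ hbij.surjective]
  · rintro ⟨h1, h2⟩
    have hm1 : ρ m ((1 : G) : G ⧸ MulAction.stabilizer G m₀) = m := by
      rw [hρ, mul_one, hgg]
    refine Set.mem_preimage.mpr ?_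
    rw [hm1]
    refine ⟨m, ⟨(1 : G), h1, hm1⟩, (1 : G), h2, hm1⟩
  · intro hE hE'
    have hfin2 : (Set.image2 ρ (ρ m '' E) E').Finite := (hE.image _).image2 _ hE'
    have hfin : ((ρ m) ⁻¹' (Set.image2 ρ (ρ m '' E) E')).Finite :=
      (hfin2.preimage (hbij.injective.injOn))
    refine ⟨hfin, ?_⟩
    calc ((ρ m) ⁻¹' (Set.image2 ρ (ρ m '' E) E')).ncard
        = (Set.image2 ρ (ρ m '' E) E').ncard := by
          rw [← Set.ncard_image_of_injective _ hbij.injective, Set.image_preimage_eq _ hbij.surjective]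
      _ ≤ ((ρ m '' E) ×ˢ E').ncard := by
          rw [← Set.image_prod]
          exact Set.ncard_image_le ((hE.image _).prod hE')
      _ = (ρ m '' E).ncard * E'.ncard := by
          rw [← Nat.card_coe_set_eq, ← Nat.card_coe_set_eq, ← Nat.card_coe_set_eq,
            Nat.card_congr (Equiv.Set.prod _ _), Nat.card_prod]
      _ ≤ E.ncard * E'.ncard := by
          gcongr
          exact Set.ncard_image_le hE
end

section
/- Let G₀ be finite, let F, F' be finite subsets of M, and let 𝔤, 𝔤' ∈ G/G₀. Then |(⇀𝔤)⁻¹(F) \ (⇀𝔤')⁻¹(F')| ≤ |G₀|² · max_{g ∈ 𝔤} |F \ (⇀ g⁻¹·𝔤')⁻¹(F')|, where (⇀𝔤)⁻¹(F) denotes the preimage of F under m ↦ m ⇀ 𝔤. -/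
theorem stmt6 {G M : Type*} [Group G] [MulAction G M]
    (htrans : ∀ m mp : M, ∃ g : G, g • m = mp)
    (m₀ : M) (gg : M → G) (hgg : ∀ m, gg m • m₀ = m)
    (ρ : M → G ⧸ MulAction.stabilizer G m₀ → M)
    (hρ : ∀ (m : M) (g : G), ρ m (g : G ⧸ MulAction.stabilizer G m₀) = (gg m * g) • m₀)
    [Finite (MulAction.stabilizer G m₀)]
    (F F' : Set M) (hF : F.Finite) (hF' : F'.Finite)
    (𝔤 𝔤' : G ⧸ MulAction.stabilizer G m₀) :
    ∃ g : G, (g : G ⧸ MulAction.stabilizer G m₀) = 𝔤 ∧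
      ((fun m => ρ m 𝔤) ⁻¹' F \ (fun m => ρ m 𝔤') ⁻¹' F').ncard ≤
        Nat.card (MulAction.stabilizer G m₀) ^ 2 *
          (F \ (fun m => ρ m (g⁻¹ • 𝔤')) ⁻¹' F').ncard := by
  classical
  obtain ⟨g₀, hg₀⟩ := QuotientGroup.mk_surjective 𝔤
  obtain ⟨g', hg'⟩ := QuotientGroup.mk_surjective 𝔤'
  haveI : Fintype (MulAction.stabilizer G m₀) := Fintype.ofFinite _
  have hρ𝔤 : ∀ m, ρ m 𝔤 = (gg m * g₀) • m₀ := fun m => by rw [← hg₀, hρ]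
  have hρ𝔤' : ∀ m, ρ m 𝔤' = (gg m * g') • m₀ := fun m => by rw [← hg', hρ]
  set s : M → G := fun m => (gg m * g₀)⁻¹ * gg (ρ m 𝔤) with hs_def
  have hsmem : ∀ m, s m ∈ MulAction.stabilizer G m₀ := by
    intro m
    have h1 : gg (ρ m 𝔤) • m₀ = (gg m * g₀) • m₀ := by rw [hgg, hρ𝔤]
    show ((gg m * g₀)⁻¹ * gg (ρ m 𝔤)) • m₀ = m₀
    rw [mul_smul, h1, ← mul_smul, inv_mul_cancel, one_smul]
  have hggρ : ∀ m, gg (ρ m 𝔤) = gg m * g₀ * s m := fun m => by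
    rw [hs_def]; simp [mul_assoc]
  set St : MulAction.stabilizer G m₀ → Set M := fun t => {m | ρ m 𝔤 ∈ F ∧ ρ m 𝔤' ∉ F' ∧ s m = (t : G)}
    with hSt_def
  set A : MulAction.stabilizer G m₀ → Set M := fun t =>
    F \ (fun m => ρ m ((g₀ * (t : G))⁻¹ • 𝔤')) ⁻¹' F' with hA_def
  have hmaps : ∀ t : MulAction.stabilizer G m₀, ∀ m ∈ St t, ρ m 𝔤 ∈ A t := by
    rintro t m ⟨h1, h2, h3⟩
    refine ⟨h1, ?_⟩
    have hq : (g₀ * (t : G))⁻¹ • 𝔤' = ((((g₀ * (t : G))⁻¹ * g') : G) : G ⧸ MulAction.stabilizer G m₀) := by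
      rw [← hg']; rfl
    show ρ (ρ m 𝔤) ((g₀ * (t : G))⁻¹ • 𝔤') ∉ F'
    rw [hq, hρ, hggρ, ← h3]
    have : gg m * g₀ * s m * ((g₀ * s m)⁻¹ * g') = gg m * g' := by group
    rw [this, ← hρ𝔤']
    exact h2
  have hinj : ∀ t : MulAction.stabilizer G m₀, Set.InjOn (fun m => ρ m 𝔤) (St t) := by
    rintro t m ⟨_, _, hm⟩ m' ⟨_, _, hm'⟩ h
    replace h : ρ m 𝔤 = ρ m' 𝔤 := h
    have h1 : gg (ρ m 𝔤) = gg (ρ m' 𝔤) := by rw [h]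
    rw [hggρ, hggρ, hm, hm'] at h1
    have h2 : gg m = gg m' := by
      have := mul_right_cancel (mul_right_cancel h1)
      exact this
    rw [← hgg m, ← hgg m', h2]
  have hAfin : ∀ t : MulAction.stabilizer G m₀, (A t).Finite := fun t => hF.diff
  have hStfin : ∀ t : MulAction.stabilizer G m₀, (St t).Finite := by
    intro t
    refine Set.Finite.of_finite_image ?_ (hinj t)
    exact (hAfin t).subset (Set.image_subset_iff.mpr (hmaps t))
  have hle : ∀ t : MulAction.stabilizer G m₀, (St t).ncard ≤ (A t).ncard := fun t =>
    Set.ncard_le_ncard_of_injOn _ (hmaps t) (hinj t) (hAfin t)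
  obtain ⟨t₀, ht₀⟩ := Finite.exists_max fun t : MulAction.stabilizer G m₀ => (A t).ncard
  refine ⟨g₀ * (t₀ : G), ?_, ?_⟩
  · rw [QuotientGroup.mk_mul_of_mem g₀ t₀.2, hg₀]
  have hcover : ((fun m => ρ m 𝔤) ⁻¹' F \ (fun m => ρ m 𝔤') ⁻¹' F')
      = ⋃ t : MulAction.stabilizer G m₀, St t := by
    ext m
    constructor
    · rintro ⟨h1, h2⟩
      exact Set.mem_iUnion.mpr ⟨⟨s m, hsmem m⟩, h1, h2, rfl⟩
    · intro hm
      obtain ⟨t, h1, h2, _⟩ := Set.mem_iUnion.mp hm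
      exact ⟨h1, h2⟩
  have hfinsetcover : (⋃ t : MulAction.stabilizer G m₀, St t)
      = ↑(Finset.univ.biUnion fun t : MulAction.stabilizer G m₀ => (hStfin t).toFinset) := by
    ext m; simp
  have hsum : ((fun m => ρ m 𝔤) ⁻¹' F \ (fun m => ρ m 𝔤') ⁻¹' F').ncard
      ≤ ∑ t : MulAction.stabilizer G m₀, (St t).ncard := by
    rw [hcover, hfinsetcover, Set.ncard_coe_finset]
    refine Finset.card_biUnion_le.trans (le_of_eq ?_)
    exact Finset.sum_congr rfl fun t _ => (Set.ncard_eq_toFinset_card _ (hStfin t)).symm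
  refine hsum.trans ?_
  calc ∑ t : MulAction.stabilizer G m₀, (St t).ncard ≤ ∑ t : MulAction.stabilizer G m₀, (A t).ncard :=
        Finset.sum_le_sum fun t _ => hle t
    _ ≤ Fintype.card (MulAction.stabilizer G m₀) * (A t₀).ncard := by
        simpa using Finset.sum_le_card_nsmul Finset.univ _ _ fun t _ => ht₀ t
    _ ≤ Nat.card (MulAction.stabilizer G m₀) ^ 2 * (A t₀).ncard := by
        rw [Nat.card_eq_fintype_card, sq]
        exact Nat.mul_le_mul_right _ (Nat.le_mul_of_pos_left _ Fintype.card_pos)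
end

section
/- Let G₀ be finite. There exists a finitely additive probability measure μ on the power set of M such that μ(A ⇀ 𝔤) = μ(A) for every 𝔤 ∈ G/G₀ and every A ⊆ M on which m ↦ m ⇀ 𝔤 is injective, if and only if there exists a mean ν on M (a linear, normalised, non-negativity-preserving functional on bounded real functions) such that ν(f ⇀ 𝔤) = ν(f) for all bounded f and all 𝔤 ∈ G/G₀. -/
set_option linter.unusedSectionVars false
set_option maxHeartbeats 1000000
open Set

section FA
variable {M : Type*} (μ : Set M → ℝ)

noncomputable def II (w : Set M → ℝ) : (Set M →₀ ℝ) →ₗ[ℝ] ℝ :=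
  Finsupp.linearCombination ℝ w

lemma II_single (w : Set M → ℝ) (A : Set M) (r : ℝ) : II w (Finsupp.single A r) = r * w A := by
  simp [II, Finsupp.linearCombination_single, smul_eq_mul]

lemma II_apply (w : Set M → ℝ) (c : Set M →₀ ℝ) :
    II w c = ∑ A ∈ c.support, c A * w A := by
  simp [II, Finsupp.linearCombination_apply, Finsupp.sum, smul_eq_mul]

/-- evaluation weight: indicator at point x -/
noncomputable def indw (x : M) : Set M → ℝ := fun A => A.indicator 1 x

lemma II_indw (x : M) (c : Set M →₀ ℝ) :
    II (indw x) c = ∑ A ∈ c.support, c A * A.indicator 1 x := II_apply _ c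

variable (hadd : ∀ A B : Set M, Disjoint A B → μ (A ∪ B) = μ A + μ B)
variable (hpos : ∀ A : Set M, 0 ≤ μ A)

include hadd in
lemma mu_empty : μ ∅ = 0 := by
  have := hadd ∅ ∅ (disjoint_bot_left)
  simp at this; linarith

include hadd in
lemma mu_biUnion {ι : Type*} (t : Finset ι) (B : ι → Set M)
    (hdisj : ∀ i ∈ t, ∀ j ∈ t, i ≠ j → Disjoint (B i) (B j)) :
    μ (⋃ i ∈ t, B i) = ∑ i ∈ t, μ (B i) := by
  classical
  induction t using Finset.induction_on with
  | empty => simpa using mu_empty μ hadd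
  | @insert a s ha ih =>
    rw [Finset.set_biUnion_insert, hadd, Finset.sum_insert ha,
      ih (fun i hi j hj hij => hdisj i (Finset.mem_insert_of_mem hi) j
        (Finset.mem_insert_of_mem hj) hij)]
    · exact disjoint_iff_inf_le.mpr fun x ⟨hx1, hx2⟩ => by
        simp only [mem_iUnion] at hx2
        obtain ⟨i, hi, hxi⟩ := hx2
        exact (hdisj a (Finset.mem_insert_self a s) i (Finset.mem_insert_of_mem hi)
          (fun h => ha (h ▸ hi))).le_bot ⟨hx1, hxi⟩

include hadd hpos in
/-- Key positivity lemma via atoms -/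
lemma II_key (c : Set M →₀ ℝ) (hc : ∀ x : M, 0 ≤ II (indw x) c) : 0 ≤ II μ c := by
  classical
  set t : Finset (Set M) := c.support with ht
  -- atoms
  set E : Finset (Set M) → Set M := fun T => {x | ∀ A ∈ t, (x ∈ A ↔ A ∈ T)} with hE
  have hdisj : ∀ T ∈ t.powerset, ∀ T' ∈ t.powerset, T ≠ T' → Disjoint (E T) (E T') := by
    intro T hT T' hT' hne
    rw [Finset.mem_powerset] at hT hT'
    refine disjoint_iff_inf_le.mpr fun x ⟨hx1, hx2⟩ => ?_
    apply hne
    ext A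
    constructor
    · intro hA; exact (hx2 A (hT hA)).mp ((hx1 A (hT hA)).mpr hA)
    · intro hA; exact (hx1 A (hT' hA)).mp ((hx2 A (hT' hA)).mpr hA)
  have hAdecomp : ∀ A ∈ t, A = ⋃ T ∈ t.powerset.filter (A ∈ ·), E T := by
    intro A hA
    ext x
    simp only [mem_iUnion, Finset.mem_filter, Finset.mem_powerset]
    constructor
    · intro hx
      exact ⟨t.filter (x ∈ ·), ⟨Finset.filter_subset _ _, Finset.mem_filter.mpr ⟨hA, hx⟩⟩,
        fun B hB => by simp [Finset.mem_filter, hB]⟩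
    · rintro ⟨T, ⟨hTsub, hAT⟩, hxE⟩
      exact (hxE A hA).mpr hAT
  have hmuA : ∀ A ∈ t, μ A = ∑ T ∈ t.powerset.filter (A ∈ ·), μ (E T) := by
    intro A hA
    rw [← mu_biUnion μ hadd _ E (fun T hT T' hT' hne =>
      hdisj T (Finset.mem_filter.mp hT).1 T' (Finset.mem_filter.mp hT').1 hne), ← hAdecomp A hA]
  rw [II_apply]
  calc (0:ℝ) ≤ ∑ T ∈ t.powerset, (∑ A ∈ T, c A) * μ (E T) := by
        apply Finset.sum_nonneg
        intro T hT
        rcases eq_empty_or_nonempty (E T) with hET | ⟨x, hx⟩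
        · rw [hET, mu_empty μ hadd, mul_zero]
        · apply mul_nonneg _ (hpos _)
          have hcx := hc x
          rw [II_indw] at hcx
          rw [Finset.mem_powerset] at hT
          have heq : ∑ A ∈ t, c A * A.indicator 1 x = ∑ A ∈ T, c A := by
            calc ∑ A ∈ t, c A * A.indicator 1 x
                = ∑ A ∈ t, if A ∈ T then c A else 0 := by
                  refine Finset.sum_congr rfl (fun A hA => ?_)
                  by_cases h : A ∈ T
                  · simp [Set.indicator_apply, (hx A hA).mpr h, h]
                  · have : x ∉ A := fun hxA => h ((hx A hA).mp hxA)
                    simp [Set.indicator_apply, this, h]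
              _ = ∑ A ∈ t ∩ T, c A := Finset.sum_ite_mem t T c
              _ = ∑ A ∈ T, c A := by rw [Finset.inter_eq_right.mpr hT]
          linarith [heq ▸ hcx]
    _ = ∑ T ∈ t.powerset, ∑ A ∈ t, (if A ∈ T then c A * μ (E T) else 0) := by
        refine Finset.sum_congr rfl (fun T hT => ?_)
        rw [Finset.mem_powerset] at hT
        rw [Finset.sum_mul]
        symm
        rw [Finset.sum_ite_mem]
        exact Finset.sum_congr (Finset.inter_eq_right.mpr hT) (fun _ _ => rfl)
    _ = ∑ A ∈ t, ∑ T ∈ t.powerset, (if A ∈ T then c A * μ (E T) else 0) := Finset.sum_comm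
    _ = ∑ A ∈ t, c A * μ A := by
        refine Finset.sum_congr rfl (fun A hA => ?_)
        rw [← Finset.sum_filter, ← Finset.mul_sum, ← hmuA A hA]

variable [TopologicalSpace M]

/-- set of values of simple majorants -/
def maj (f : M → ℝ) : Set ℝ :=
  { r | ∃ c : Set M →₀ ℝ, (∀ x : M, f x ≤ II (indw x) c) ∧ II μ c = r }

lemma indw_univ (x : M) : indw x Set.univ = 1 := by simp [indw]

lemma maj_nonempty (f : BoundedContinuousFunction M ℝ) : (maj μ f).Nonempty := by
  refine ⟨‖f‖ * μ Set.univ, Finsupp.single Set.univ ‖f‖, fun x => ?_, II_single μ _ _⟩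
  rw [II_single, indw_univ, mul_one]
  exact le_trans (le_abs_self _) ((Real.norm_eq_abs (f x)) ▸ f.norm_coe_le_norm x)

include hadd hpos in
lemma maj_ge {f : M → ℝ} (b : ℝ) (hb : ∀ x, b ≤ f x) : ∀ r ∈ maj μ f, b * μ Set.univ ≤ r := by
  rintro r ⟨c, hc, rfl⟩
  have h0 : ∀ x : M, 0 ≤ II (indw x) (c + Finsupp.single Set.univ (-b)) := by
    intro x
    rw [map_add, II_single, indw_univ, mul_one]
    linarith [hc x, hb x]
  have := II_key μ hadd hpos _ h0
  rw [map_add, II_single] at this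
  linarith

noncomputable def pp (f : M → ℝ) : ℝ := sInf (maj μ f)

include hadd hpos in
lemma maj_bddBelow (f : BoundedContinuousFunction M ℝ) : BddBelow (maj μ (⇑f)) := by
  refine ⟨(-‖f‖) * μ Set.univ, fun r hr => maj_ge μ hadd hpos _ (fun x => ?_) r hr⟩
  have := (abs_le.mp ((Real.norm_eq_abs (f x)) ▸ f.norm_coe_le_norm x)).1
  linarith

include hadd hpos in
lemma pp_le {f : BoundedContinuousFunction M ℝ} {r : ℝ} (hr : r ∈ maj μ (⇑f)) : pp μ f ≤ r :=
  csInf_le (maj_bddBelow μ hadd hpos f) hr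

include hadd hpos in
lemma le_pp {f : BoundedContinuousFunction M ℝ} {b : ℝ} (hb : ∀ r ∈ maj μ (⇑f), b ≤ r) :
    b ≤ pp μ f := le_csInf (maj_nonempty μ f) hb

include hadd hpos in
lemma pp_add (f g : BoundedContinuousFunction M ℝ) :
    pp μ (⇑(f + g)) ≤ pp μ f + pp μ g := by
  have key : ∀ r ∈ maj μ (⇑f), ∀ s ∈ maj μ (⇑g), pp μ (⇑(f+g)) ≤ r + s := by
    rintro r ⟨c₁, hc₁, rfl⟩ s ⟨c₂, hc₂, rfl⟩
    refine pp_le μ hadd hpos ⟨c₁ + c₂, fun x => ?_, map_add _ _ _⟩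
    rw [map_add]
    exact add_le_add (hc₁ x) (hc₂ x)
  have h1 : ∀ r ∈ maj μ (⇑f), pp μ (⇑(f+g)) - r ≤ pp μ g := fun r hr =>
    le_pp μ hadd hpos (fun s hs => by linarith [key r hr s hs])
  have h2 : pp μ (⇑(f+g)) - pp μ g ≤ pp μ f :=
    le_pp μ hadd hpos (fun r hr => by linarith [h1 r hr])
  linarith

include hadd hpos in
lemma pp_smul_le (a : ℝ) (ha : 0 < a) (f : BoundedContinuousFunction M ℝ) :
    pp μ (⇑(a • f)) ≤ a * pp μ f := by
  have key : ∀ r ∈ maj μ (⇑f), pp μ (⇑(a • f)) ≤ a * r := by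
    rintro r ⟨c, hc, rfl⟩
    refine pp_le μ hadd hpos ⟨a • c, fun x => ?_, by rw [map_smul, smul_eq_mul]⟩
    rw [map_smul, smul_eq_mul]
    calc (a • f) x = a * f x := by simp
      _ ≤ a * II (indw x) c := by nlinarith [hc x]
  have : pp μ (⇑(a • f)) / a ≤ pp μ f := le_pp μ hadd hpos (fun r hr =>
    (div_le_iff₀' ha).mpr (key r hr))
  calc pp μ (⇑(a • f)) = a * (pp μ (⇑(a • f)) / a) := by field_simp
    _ ≤ a * pp μ f := by nlinarith

include hadd hpos in
lemma pp_smul (a : ℝ) (ha : 0 < a) (f : BoundedContinuousFunction M ℝ) :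
    pp μ (⇑(a • f)) = a * pp μ f := by
  refine le_antisymm (pp_smul_le μ hadd hpos a ha f) ?_
  have := pp_smul_le μ hadd hpos a⁻¹ (inv_pos.mpr ha) (a • f)
  rw [inv_smul_smul₀ ha.ne' f] at this
  calc a * pp μ f ≤ a * (a⁻¹ * pp μ (⇑(a • f))) := by nlinarith
    _ = pp μ (⇑(a • f)) := by field_simp

variable (hone : μ Set.univ = 1)

include hadd hpos hone in
lemma exists_nu [Nonempty M] :
    ∃ ν : BoundedContinuousFunction M ℝ →ₗ[ℝ] ℝ, ν 1 = 1 ∧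
      ∀ f : BoundedContinuousFunction M ℝ, ν f ≤ pp μ f := by
  have h1ne : (1 : BoundedContinuousFunction M ℝ) ≠ 0 := by
    intro h
    have := congrArg (fun f : BoundedContinuousFunction M ℝ => f (Classical.arbitrary M)) h
    simpa using this
  set f₀ := (LinearPMap.mkSpanSingleton (K := ℝ) (1 : BoundedContinuousFunction M ℝ) (1 : ℝ) h1ne :
    BoundedContinuousFunction M ℝ →ₗ.[ℝ] ℝ)
  have hdom : ∀ z : f₀.domain, f₀ z ≤ pp μ (⇑(z : BoundedContinuousFunction M ℝ)) := by
    rintro ⟨z, hz⟩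
    obtain ⟨a, ha⟩ := Submodule.mem_span_singleton.mp hz
    have hz' : (⟨z, hz⟩ : f₀.domain) = ⟨a • 1, ha ▸ hz⟩ := by
      apply Subtype.ext; exact ha.symm
    rw [hz']
    have happ : f₀ ⟨a • 1, ha ▸ hz⟩ = a • (1:ℝ) := LinearPMap.mkSpanSingleton'_apply _ _ _ a _
    rw [happ, smul_eq_mul, mul_one]
    refine le_pp μ hadd hpos (fun r hr => ?_)
    have := maj_ge μ hadd hpos (f := ⇑((a:ℝ) • (1:BoundedContinuousFunction M ℝ))) a
      (fun x => by simp) r hr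
    rwa [hone, mul_one] at this
  obtain ⟨ν, hag, hle⟩ := exists_extension_of_le_sublinear f₀ (fun f => pp μ f)
    (fun c hc x => pp_smul μ hadd hpos c hc x) (fun x y => pp_add μ hadd hpos x y) hdom
  refine ⟨ν, ?_, fun f => hle f⟩
  have hmem : (1 : BoundedContinuousFunction M ℝ) ∈ f₀.domain :=
    Submodule.mem_span_singleton_self _
  have := hag ⟨1, hmem⟩
  rw [this]
  exact LinearPMap.mkSpanSingleton_apply ℝ ℝ h1ne 1

end FA

section Grp
variable {G M : Type*} [Group G] [MulAction G M]
    (m₀ : M) (gg : M → G) (hgg : ∀ m, gg m • m₀ = m)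
    (ρ : M → G ⧸ MulAction.stabilizer G m₀ → M)
    (hρ : ∀ (m : M) (g : G), ρ m (g : G ⧸ MulAction.stabilizer G m₀) = (gg m * g) • m₀)
    [Finite (MulAction.stabilizer G m₀)]

include hgg hρ in
lemma fiber_setup (𝔤 : G ⧸ MulAction.stabilizer G m₀) :
    ∃ σ : M → G, (∀ m, σ m ∈ MulAction.stabilizer G m₀) ∧
      (∀ m₁ m₂, ρ m₁ 𝔤 = ρ m₂ 𝔤 → σ m₁ = σ m₂ → m₁ = m₂) := by
  obtain ⟨gq, hgq⟩ : ∃ gq : G, (gq : G ⧸ MulAction.stabilizer G m₀) = 𝔤 :=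
    ⟨Quotient.out 𝔤, Quotient.out_eq 𝔤⟩
  have hφ : ∀ m, ρ m 𝔤 = (gg m * gq) • m₀ := fun m => by rw [← hgq]; exact hρ m gq
  refine ⟨fun m => (gg (ρ m 𝔤))⁻¹ * (gg m * gq), fun m => ?_, fun m₁ m₂ hφeq hσeq => ?_⟩
  · show ((gg (ρ m 𝔤))⁻¹ * (gg m * gq)) • m₀ = m₀
    rw [mul_smul, ← hφ m, inv_smul_eq_iff, hgg]
  · have h1 : gg m₁ * gq = gg m₂ * gq := by
      have := hσeq
      dsimp only at this
      rw [hφeq] at this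
      exact mul_left_cancel this
    have h2 : gg m₁ = gg m₂ := mul_right_cancel h1
    rw [← hgg m₁, ← hgg m₂, h2]

end Grp

section Main
variable {G M : Type*} [Group G] [MulAction G M]
    (m₀ : M) (gg : M → G) (hgg : ∀ m, gg m • m₀ = m)
    (ρ : M → G ⧸ MulAction.stabilizer G m₀ → M)
    (hρ : ∀ (m : M) (g : G), ρ m (g : G ⧸ MulAction.stabilizer G m₀) = (gg m * g) • m₀)
    [Finite (MulAction.stabilizer G m₀)]
    [TopologicalSpace M]
    (μ : Set M → ℝ)
    (hadd : ∀ A B : Set M, Disjoint A B → μ (A ∪ B) = μ A + μ B)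
    (hpos : ∀ A : Set M, 0 ≤ μ A)
    (hone : μ Set.univ = 1)
    (hinv : ∀ (𝔤 : G ⧸ MulAction.stabilizer G m₀) (A : Set M),
        Set.InjOn (fun m => ρ m 𝔤) A → μ ((fun a => ρ a 𝔤) '' A) = μ A)

include hgg hρ hadd hpos hone hinv in
lemma maj_value (𝔤 : G ⧸ MulAction.stabilizer G m₀) (f g : BoundedContinuousFunction M ℝ)
    (hg : ∀ m : M, g m = ∑ᶠ mp ∈ (fun x => ρ x 𝔤) ⁻¹' {m}, f mp) :
    ∃ N : ℕ, ∀ ε : ℝ, 0 < ε →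
      (∃ c : Set M →₀ ℝ, (∀ x : M, (⇑(g - f)) x ≤ II (indw x) c) ∧
        II μ c = (N : ℝ) * ε) ∧
      (∃ c : Set M →₀ ℝ, (∀ x : M, (⇑(f - g)) x ≤ II (indw x) c) ∧ II μ c = ε) := by
  classical
  obtain ⟨σ, hσmem, hσinj⟩ := fiber_setup m₀ gg hgg ρ hρ 𝔤
  set φ : M → M := fun m => ρ m 𝔤 with hφdef
  haveI : Fintype ↥(MulAction.stabilizer G m₀) := Fintype.ofFinite _
  set N : ℕ := Fintype.card ↥(MulAction.stabilizer G m₀) with hN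
  -- fibers
  have hfibfin : ∀ m : M, (φ ⁻¹' {m}).Finite := by
    intro m
    haveI : Finite ↥(φ ⁻¹' {m}) := by
      refine Finite.of_injective
        (fun x => (⟨σ x.1, hσmem x.1⟩ : MulAction.stabilizer G m₀)) ?_
      rintro ⟨x₁, hx₁⟩ ⟨x₂, hx₂⟩ h
      simp only [Subtype.mk.injEq] at h ⊢
      exact hσinj x₁ x₂ (by rw [show ρ x₁ 𝔤 = m from hx₁, show ρ x₂ 𝔤 = m from hx₂]) h
    exact Set.toFinite _
  set F : M → Finset M := fun m => (hfibfin m).toFinset with hF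
  have hFmem : ∀ m x, x ∈ F m ↔ φ x = m := by
    intro m x
    simp [hF, Set.Finite.mem_toFinset]
  have hgF : ∀ m : M, g m = ∑ x ∈ F m, f x := by
    intro m
    rw [hg m, ← Set.Finite.coe_toFinset (hfibfin m), finsum_mem_coe_finset]
  have hFcard : ∀ m : M, (F m).card ≤ N := by
    intro m
    have hinj : Function.Injective
        (fun x : ↥(φ ⁻¹' {m}) => (⟨σ x.1, hσmem x.1⟩ : MulAction.stabilizer G m₀)) := by
      rintro ⟨x₁, hx₁⟩ ⟨x₂, hx₂⟩ h
      simp only [Subtype.mk.injEq] at h ⊢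
      exact hσinj x₁ x₂ (by rw [show ρ x₁ 𝔤 = m from hx₁, show ρ x₂ 𝔤 = m from hx₂]) h
    calc (F m).card = (φ ⁻¹' {m}).ncard := (Set.ncard_eq_toFinset_card _ (hfibfin m)).symm
      _ = Nat.card ↥(φ ⁻¹' {m}) := (Nat.card_coe_set_eq _).symm
      _ ≤ Nat.card ↥(MulAction.stabilizer G m₀) := Nat.card_le_card_of_injective _ hinj
      _ = N := Nat.card_eq_fintype_card
  refine ⟨N, fun ε hε => ?_⟩
  -- level sets
  set Ak : ℤ → Set M := fun k => (⇑f) ⁻¹' (Set.Ico ((k:ℝ)*ε) (((k:ℝ)+1)*ε)) with hAk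
  set idx : M → ℤ := fun x => ⌊f x / ε⌋ with hidx
  have hmemA : ∀ (x : M) (k : ℤ), x ∈ Ak k ↔ idx x = k := by
    intro x k
    simp only [hAk, Set.mem_preimage, Set.mem_Ico, hidx]
    rw [Int.floor_eq_iff]
    constructor
    · rintro ⟨h1, h2⟩
      exact ⟨(le_div_iff₀ hε).mpr (by linarith), (div_lt_iff₀ hε).mpr (by linarith)⟩
    · rintro ⟨h1, h2⟩
      rw [le_div_iff₀ hε] at h1
      rw [div_lt_iff₀ hε] at h2
      exact ⟨by linarith, by linarith⟩
  set K : ℤ := ⌈‖f‖/ε⌉ + 1 with hK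
  set sK : Finset ℤ := Finset.Icc (-K) K with hsK
  have hidxmem : ∀ x : M, idx x ∈ sK := by
    intro x
    have hfx := abs_le.mp ((Real.norm_eq_abs (f x)) ▸ f.norm_coe_le_norm x)
    have hceil : ‖f‖/ε ≤ (⌈‖f‖/ε⌉ : ℝ) := Int.le_ceil _
    have h3 : ⌊f x / ε⌋ ≤ ⌊‖f‖/ε⌋ := Int.floor_le_floor (by gcongr; exact hfx.2)
    have h4 : ⌊‖f‖/ε⌋ ≤ ⌈‖f‖/ε⌉ := Int.floor_le_ceil _
    have h5 : -(⌈‖f‖/ε⌉+1) ≤ ⌊f x / ε⌋ := by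
      rw [Int.le_floor]
      push_cast
      have h2 : -‖f‖ / ε ≤ f x / ε := by gcongr; linarith
      rw [neg_div] at h2
      linarith
    rw [hsK, Finset.mem_Icc, hK]
    have h6 : idx x = ⌊f x / ε⌋ := rfl
    omega
  set sfun : M → ℝ := fun x => ((idx x : ℝ)) * ε with hsfun
  have hsfun_le : ∀ x : M, sfun x ≤ f x ∧ f x < sfun x + ε := by
    intro x
    have h1 : (↑⌊f x / ε⌋ : ℝ) ≤ f x / ε := Int.floor_le _
    have h2 : f x / ε < ↑⌊f x / ε⌋ + 1 := Int.lt_floor_add_one _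
    rw [le_div_iff₀ hε] at h1
    rw [div_lt_iff₀ hε] at h2
    constructor
    · simpa [hsfun, hidx] using h1
    · simp only [hsfun, hidx]
      nlinarith
  have hsum_ind : ∀ x : M, ∑ k ∈ sK, ((k:ℝ)*ε) * (Ak k).indicator 1 x = sfun x := by
    intro x
    rw [Finset.sum_eq_single (idx x)]
    · have hx : x ∈ Ak (idx x) := (hmemA x (idx x)).mpr rfl
      simp [Set.indicator_of_mem hx, hsfun]
    · intro k _ hne
      have hx : x ∉ Ak k := fun hxk => hne ((hmemA x k).mp hxk).symm
      simp [Set.indicator_of_notMem hx]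
    · intro h; exact absurd (hidxmem x) h
  -- pieces
  set As : ℤ → ↥(MulAction.stabilizer G m₀) → Set M :=
    fun k s' => Ak k ∩ σ ⁻¹' {(s' : G)} with hAs
  set Bs : ℤ → ↥(MulAction.stabilizer G m₀) → Set M := fun k s' => φ '' (As k s') with hBs
  have hmuB : ∀ k s', μ (Bs k s') = μ (As k s') := by
    intro k s'
    have hio : Set.InjOn (fun m => ρ m 𝔤) (As k s') := by
      intro x hx y hy hxy
      have hx2 : σ x = (s' : G) := hx.2
      have hy2 : σ y = (s' : G) := hy.2
      exact hσinj x y hxy (hx2.trans hy2.symm)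
    exact hinv 𝔤 (As k s') hio
  have hmuA : ∀ k, ∑ s' : ↥(MulAction.stabilizer G m₀), μ (As k s') = μ (Ak k) := by
    intro k
    have hdisj : ∀ s' ∈ (Finset.univ : Finset ↥(MulAction.stabilizer G m₀)), ∀ t' ∈ Finset.univ,
        s' ≠ t' → Disjoint (As k s') (As k t') := by
      intro s' _ t' _ hne
      refine Set.disjoint_left.mpr fun x hx hx' => hne ?_
      have h1 : σ x = (s' : G) := hx.2
      have h2 : σ x = (t' : G) := hx'.2
      exact Subtype.ext (h1 ▸ h2 ▸ rfl)
    have hun : (⋃ s' ∈ (Finset.univ : Finset ↥(MulAction.stabilizer G m₀)), As k s') = Ak k := by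
      ext x
      constructor
      · intro hx
        obtain ⟨s', -, hx⟩ := Set.mem_iUnion₂.mp hx
        exact hx.1
      · intro hx
        exact Set.mem_iUnion₂.mpr ⟨⟨σ x, hσmem x⟩, Finset.mem_univ _, hx, rfl⟩
    rw [← hun, mu_biUnion μ hadd _ _ hdisj]
  -- counting
  have hcount : ∀ (k : ℤ) (x : M), ∑ y ∈ F x, (Ak k).indicator (1 : M → ℝ) y
      = ∑ s' : ↥(MulAction.stabilizer G m₀), (Bs k s').indicator (1 : M → ℝ) x := by
    intro k x
    have h1 : ∑ y ∈ F x, (Ak k).indicator (1:M→ℝ) y = ((F x).filter (· ∈ Ak k)).card := by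
      rw [show ∑ y ∈ F x, (Ak k).indicator (1:M→ℝ) y
          = ∑ y ∈ F x, if y ∈ Ak k then (1:ℝ) else 0 from
        Finset.sum_congr rfl (fun y _ => by simp [Set.indicator_apply])]
      rw [Finset.sum_boole]
    have h2 : ∑ s' : ↥(MulAction.stabilizer G m₀), (Bs k s').indicator (1:M→ℝ) x
        = ((Finset.univ : Finset ↥(MulAction.stabilizer G m₀)).filter
            (fun s' => x ∈ Bs k s')).card := by
      rw [show ∑ s' : ↥(MulAction.stabilizer G m₀), (Bs k s').indicator (1:M→ℝ) x
          = ∑ s' : ↥(MulAction.stabilizer G m₀), if x ∈ Bs k s' then (1:ℝ) else 0 from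
        Finset.sum_congr rfl (fun s' _ => by simp [Set.indicator_apply])]
      rw [Finset.sum_boole]
    rw [h1, h2]
    congr 1
    apply Finset.card_bij (fun y _ => (⟨σ y, hσmem y⟩ : ↥(MulAction.stabilizer G m₀)))
    · intro y hy
      rw [Finset.mem_filter] at hy ⊢
      refine ⟨Finset.mem_univ _, ?_⟩
      exact ⟨y, ⟨hy.2, rfl⟩, (hFmem x y).mp hy.1⟩
    · intro y₁ hy₁ y₂ hy₂ hee
      rw [Finset.mem_filter] at hy₁ hy₂
      have hσe : σ y₁ = σ y₂ := congrArg Subtype.val hee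
      exact hσinj y₁ y₂ (((hFmem x y₁).mp hy₁.1).trans ((hFmem x y₂).mp hy₂.1).symm) hσe
    · intro s' hs'
      rw [Finset.mem_filter] at hs'
      obtain ⟨y, ⟨hyA, hyσ⟩, hyφ⟩ := hs'.2
      refine ⟨y, Finset.mem_filter.mpr ⟨(hFmem x y).mpr hyφ, hyA⟩, Subtype.ext hyσ⟩
  -- error sums
  have herr : ∀ x : M, 0 ≤ ∑ y ∈ F x, (f y - sfun y) ∧
      ∑ y ∈ F x, (f y - sfun y) ≤ (N:ℝ) * ε := by
    intro x
    constructor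
    · exact Finset.sum_nonneg (fun y _ => by linarith [(hsfun_le y).1])
    · calc ∑ y ∈ F x, (f y - sfun y) ≤ (F x).card • ε :=
            Finset.sum_le_card_nsmul _ _ ε (fun y _ => by linarith [(hsfun_le y).2])
        _ = ((F x).card : ℝ) * ε := nsmul_eq_mul _ _
        _ ≤ (N:ℝ) * ε := by
            have := hFcard x
            have : ((F x).card : ℝ) ≤ (N : ℝ) := by exact_mod_cast this
            nlinarith
  -- g pointwise decomposition
  have hgx : ∀ x : M, g x = (∑ k ∈ sK, ∑ s' : ↥(MulAction.stabilizer G m₀),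
      ((k:ℝ)*ε) * (Bs k s').indicator 1 x) + ∑ y ∈ F x, (f y - sfun y) := by
    intro x
    have h0 : ∀ y : M, f y = sfun y + (f y - sfun y) := fun y => by ring
    calc g x = ∑ y ∈ F x, f y := hgF x
      _ = ∑ y ∈ F x, (sfun y + (f y - sfun y)) := Finset.sum_congr rfl (fun y _ => h0 y)
      _ = ∑ y ∈ F x, sfun y + ∑ y ∈ F x, (f y - sfun y) := Finset.sum_add_distrib
      _ = (∑ k ∈ sK, ∑ s' : ↥(MulAction.stabilizer G m₀),
            ((k:ℝ)*ε) * (Bs k s').indicator 1 x) + ∑ y ∈ F x, (f y - sfun y) := by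
          congr 1
          calc ∑ y ∈ F x, sfun y
              = ∑ y ∈ F x, ∑ k ∈ sK, ((k:ℝ)*ε) * (Ak k).indicator 1 y :=
                Finset.sum_congr rfl (fun y _ => (hsum_ind y).symm)
            _ = ∑ k ∈ sK, ∑ y ∈ F x, ((k:ℝ)*ε) * (Ak k).indicator 1 y := Finset.sum_comm
            _ = ∑ k ∈ sK, ((k:ℝ)*ε) * ∑ y ∈ F x, (Ak k).indicator 1 y := by
                refine Finset.sum_congr rfl (fun k _ => ?_)
                rw [Finset.mul_sum]
            _ = ∑ k ∈ sK, ((k:ℝ)*ε) * ∑ s' : ↥(MulAction.stabilizer G m₀),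
                  (Bs k s').indicator 1 x := by
                refine Finset.sum_congr rfl (fun k _ => ?_)
                rw [hcount k x]
            _ = ∑ k ∈ sK, ∑ s' : ↥(MulAction.stabilizer G m₀),
                  ((k:ℝ)*ε) * (Bs k s').indicator 1 x := by
                refine Finset.sum_congr rfl (fun k _ => ?_)
                rw [Finset.mul_sum]
  -- the two majorants
  refine ⟨?_, ?_⟩
  · -- majorant of g - f
    refine ⟨(∑ k ∈ sK, ∑ s' : ↥(MulAction.stabilizer G m₀),
        Finsupp.single (Bs k s') ((k:ℝ)*ε))
      + (∑ k ∈ sK, Finsupp.single (Ak k) (-((k:ℝ)*ε)))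
      + Finsupp.single Set.univ ((N:ℝ)*ε), fun x => ?_, ?_⟩
    · have hII : II (indw x) ((∑ k ∈ sK, ∑ s' : ↥(MulAction.stabilizer G m₀),
          Finsupp.single (Bs k s') ((k:ℝ)*ε))
          + (∑ k ∈ sK, Finsupp.single (Ak k) (-((k:ℝ)*ε)))
          + Finsupp.single Set.univ ((N:ℝ)*ε))
          = (∑ k ∈ sK, ∑ s' : ↥(MulAction.stabilizer G m₀),
              ((k:ℝ)*ε) * (Bs k s').indicator 1 x) - sfun x + (N:ℝ)*ε := by
        rw [map_add, map_add, map_sum, map_sum, II_single]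
        simp only [map_sum, II_single]
        have e1 : ∑ k ∈ sK, (-((k:ℝ)*ε)) * indw x (Ak k) = - sfun x := by
          rw [← hsum_ind x, ← Finset.sum_neg_distrib]
          exact Finset.sum_congr rfl (fun k _ => by rw [indw]; ring)
        rw [e1]
        simp only [indw, Set.indicator_univ, Pi.one_apply]
        ring
      rw [hII]
      have h1 := (herr x).2
      have h2 := (hsfun_le x).1
      have h3 := hgx x
      simp only [BoundedContinuousFunction.coe_sub, Pi.sub_apply]
      linarith
    · rw [map_add, map_add, map_sum, II_single]
      simp only [map_sum, II_single]
      have e1 : ∀ k : ℤ, ∑ s' : ↥(MulAction.stabilizer G m₀), ((k:ℝ)*ε) * μ (Bs k s')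
          = ((k:ℝ)*ε) * μ (Ak k) := by
        intro k
        rw [show ∑ s' : ↥(MulAction.stabilizer G m₀), ((k:ℝ)*ε) * μ (Bs k s')
            = ∑ s' : ↥(MulAction.stabilizer G m₀), ((k:ℝ)*ε) * μ (As k s') from
          Finset.sum_congr rfl (fun s' _ => by rw [hmuB])]
        rw [← Finset.mul_sum, hmuA]
      rw [show ∑ k ∈ sK, ∑ s' : ↥(MulAction.stabilizer G m₀), ((k:ℝ)*ε) * μ (Bs k s')
          = ∑ k ∈ sK, ((k:ℝ)*ε) * μ (Ak k) from Finset.sum_congr rfl (fun k _ => e1 k)]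
      rw [hone]
      have e3 : ∑ k ∈ sK, (-((k:ℝ)*ε)) * μ (Ak k) = - ∑ k ∈ sK, ((k:ℝ)*ε) * μ (Ak k) := by
        rw [← Finset.sum_neg_distrib]
        exact Finset.sum_congr rfl (fun k _ => by ring)
      rw [e3]
      ring
  · -- majorant of f - g
    refine ⟨(∑ k ∈ sK, Finsupp.single (Ak k) ((k:ℝ)*ε))
      + (∑ k ∈ sK, ∑ s' : ↥(MulAction.stabilizer G m₀),
          Finsupp.single (Bs k s') (-((k:ℝ)*ε)))
      + Finsupp.single Set.univ ε, fun x => ?_, ?_⟩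
    · have hII : II (indw x) ((∑ k ∈ sK, Finsupp.single (Ak k) ((k:ℝ)*ε))
          + (∑ k ∈ sK, ∑ s' : ↥(MulAction.stabilizer G m₀),
              Finsupp.single (Bs k s') (-((k:ℝ)*ε)))
          + Finsupp.single Set.univ ε)
          = sfun x - (∑ k ∈ sK, ∑ s' : ↥(MulAction.stabilizer G m₀),
              ((k:ℝ)*ε) * (Bs k s').indicator 1 x) + ε := by
        rw [map_add, map_add, map_sum, map_sum, II_single]
        simp only [map_sum, II_single]
        have e1 : ∑ k ∈ sK, ((k:ℝ)*ε) * indw x (Ak k) = sfun x := by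
          rw [← hsum_ind x]
          exact Finset.sum_congr rfl (fun k _ => by rw [indw])
        rw [e1]
        have e2 : ∑ k ∈ sK, ∑ s' : ↥(MulAction.stabilizer G m₀),
            (-((k:ℝ)*ε)) * indw x (Bs k s')
            = - ∑ k ∈ sK, ∑ s' : ↥(MulAction.stabilizer G m₀),
              ((k:ℝ)*ε) * (Bs k s').indicator 1 x := by
          rw [← Finset.sum_neg_distrib]
          refine Finset.sum_congr rfl (fun k _ => ?_)
          rw [← Finset.sum_neg_distrib]
          exact Finset.sum_congr rfl (fun s' _ => by rw [indw]; ring)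
        rw [e2]
        simp only [indw, Set.indicator_univ, Pi.one_apply]
        ring
      rw [hII]
      have h1 := (herr x).1
      have h2 := (hsfun_le x).2
      have h3 := hgx x
      simp only [BoundedContinuousFunction.coe_sub, Pi.sub_apply]
      linarith
    · rw [map_add, map_add, map_sum, II_single]
      simp only [map_sum, II_single]
      have e1 : ∀ k : ℤ, ∑ s' : ↥(MulAction.stabilizer G m₀), (-((k:ℝ)*ε)) * μ (Bs k s')
          = -(((k:ℝ)*ε) * μ (Ak k)) := by
        intro k
        rw [show ∑ s' : ↥(MulAction.stabilizer G m₀), (-((k:ℝ)*ε)) * μ (Bs k s')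
            = ∑ s' : ↥(MulAction.stabilizer G m₀), (-((k:ℝ)*ε)) * μ (As k s') from
          Finset.sum_congr rfl (fun s' _ => by rw [hmuB])]
        rw [show ∑ s' : ↥(MulAction.stabilizer G m₀), (-((k:ℝ)*ε)) * μ (As k s')
            = -(((k:ℝ)*ε) * ∑ s' : ↥(MulAction.stabilizer G m₀), μ (As k s')) from by
          rw [Finset.mul_sum, ← Finset.sum_neg_distrib]
          exact Finset.sum_congr rfl (fun s' _ => by ring)]
        rw [hmuA]
      rw [show ∑ k ∈ sK, ∑ s' : ↥(MulAction.stabilizer G m₀), (-((k:ℝ)*ε)) * μ (Bs k s')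
          = ∑ k ∈ sK, -(((k:ℝ)*ε) * μ (Ak k)) from Finset.sum_congr rfl (fun k _ => e1 k)]
      rw [hone]
      rw [show ∑ k ∈ sK, -(((k:ℝ)*ε) * μ (Ak k))
          = - ∑ k ∈ sK, ((k:ℝ)*ε) * μ (Ak k) from by rw [← Finset.sum_neg_distrib]]
      ring

end Main

theorem stmt11 {G M : Type*} [Group G] [MulAction G M]
    (htrans : ∀ m mp : M, ∃ g : G, g • m = mp)
    (m₀ : M) (gg : M → G) (hgg : ∀ m, gg m • m₀ = m)
    (ρ : M → G ⧸ MulAction.stabilizer G m₀ → M)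
    (hρ : ∀ (m : M) (g : G), ρ m (g : G ⧸ MulAction.stabilizer G m₀) = (gg m * g) • m₀)
    [Finite (MulAction.stabilizer G m₀)]
    [TopologicalSpace M] [DiscreteTopology M] :
    (∃ μ : Set M → ℝ,
      (∀ A : Set M, 0 ≤ μ A ∧ μ A ≤ 1) ∧ μ Set.univ = 1 ∧
      (∀ A B : Set M, Disjoint A B → μ (A ∪ B) = μ A + μ B) ∧
      (∀ (𝔤 : G ⧸ MulAction.stabilizer G m₀) (A : Set M),
        Set.InjOn (fun m => ρ m 𝔤) A → μ ((fun a => ρ a 𝔤) '' A) = μ A))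
    ↔
    (∃ ν : BoundedContinuousFunction M ℝ →ₗ[ℝ] ℝ,
      ν 1 = 1 ∧
      (∀ f : BoundedContinuousFunction M ℝ, (∀ m : M, 0 ≤ f m) → 0 ≤ ν f) ∧
      (∀ (𝔤 : G ⧸ MulAction.stabilizer G m₀) (f g : BoundedContinuousFunction M ℝ),
        (∀ m : M, g m = ∑ᶠ mp ∈ (fun x => ρ x 𝔤) ⁻¹' {m}, f mp) → ν g = ν f)) := by
  classical
  haveI : Nonempty M := ⟨m₀⟩
  constructor
  · rintro ⟨μ, hbounds, hone, hadd, hinv⟩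
    have hpos : ∀ A : Set M, 0 ≤ μ A := fun A => (hbounds A).1
    obtain ⟨ν, hν1, hνle⟩ := exists_nu μ hadd hpos hone
    refine ⟨ν, hν1, ?_, ?_⟩
    · intro f hf
      have h0 : (0:ℝ) ∈ maj μ (⇑(-f)) := by
        refine ⟨0, fun x => ?_, map_zero _⟩
        rw [map_zero]
        simp only [BoundedContinuousFunction.coe_neg, Pi.neg_apply]
        linarith [hf x]
      have h1 := hνle (-f)
      have h2 := pp_le μ hadd hpos h0
      rw [map_neg] at h1
      linarith
    · intro 𝔤 f g hg
      obtain ⟨N, hNe⟩ := maj_value m₀ gg hgg ρ hρ μ hadd hpos hone hinv 𝔤 f g hg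
      have hN1 : (0:ℝ) < (N:ℝ) + 1 := by positivity
      have h1 : ν (g - f) ≤ 0 := by
        by_contra h
        push_neg at h
        set a := ν (g - f) with ha
        set ε := a / (2 * ((N:ℝ) + 1)) with hεd
        have hε : 0 < ε := by positivity
        obtain ⟨⟨c, hc, hval⟩, -⟩ := hNe ε hε
        have h2 := hνle (g - f)
        have h3 : pp μ (⇑(g - f)) ≤ (N:ℝ) * ε := pp_le μ hadd hpos ⟨c, hc, hval⟩
        have h4 : (N:ℝ) * ε < a := by
          rw [hεd]
          rw [div_eq_mul_inv]
          have : (N:ℝ) < 2 * ((N:ℝ)+1) := by nlinarith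
          calc (N:ℝ) * (a * (2 * ((N:ℝ)+1))⁻¹) < 2*((N:ℝ)+1) * (a * (2 * ((N:ℝ)+1))⁻¹) := by
                apply mul_lt_mul_of_pos_right this
                positivity
            _ = a := by field_simp
        linarith
      have h2 : ν (f - g) ≤ 0 := by
        by_contra h
        push_neg at h
        set a := ν (f - g) with ha
        have hε : 0 < a / 2 := by positivity
        obtain ⟨-, ⟨c, hc, hval⟩⟩ := hNe (a/2) hε
        have h2 := hνle (f - g)
        have h3 : pp μ (⇑(f - g)) ≤ a/2 := pp_le μ hadd hpos ⟨c, hc, hval⟩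
        linarith
      rw [map_sub] at h1 h2
      linarith
  · rintro ⟨ν, hν1, hνpos, hνinv⟩
    set ind : Set M → BoundedContinuousFunction M ℝ := fun A =>
      BoundedContinuousFunction.ofNormedAddCommGroup (A.indicator 1)
        continuous_of_discreteTopology 1
        (fun x => by
          rw [Set.indicator_apply]
          split_ifs <;> simp) with hind
    have hindapp : ∀ (A : Set M) (x : M), ind A x = A.indicator 1 x := fun A x => rfl
    have hcompl : ∀ A : Set M, ind A + ind Aᶜ = 1 := by
      intro A
      ext x
      simp only [BoundedContinuousFunction.coe_add, Pi.add_apply, hindapp,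
        BoundedContinuousFunction.coe_one, Pi.one_apply]
      by_cases hx : x ∈ A
      · simp [Set.indicator_apply, hx]
      · simp [Set.indicator_apply, hx]
    refine ⟨fun A => ν (ind A), fun A => ⟨?_, ?_⟩, ?_, ?_, ?_⟩
    · exact hνpos (ind A) (fun m => by rw [hindapp]; exact Set.indicator_nonneg (fun _ _ => zero_le_one) m)
    · have hc := hνpos (ind Aᶜ) (fun m => by rw [hindapp]; exact Set.indicator_nonneg (fun _ _ => zero_le_one) m)
      have := congrArg ν (hcompl A)
      rw [map_add, hν1] at this
      linarith
    · show ν (ind Set.univ) = 1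
      have : ind Set.univ = 1 := by
        ext x
        simp [hindapp, Set.indicator_apply]
      rw [this, hν1]
    · intro A B hAB
      show ν (ind (A ∪ B)) = ν (ind A) + ν (ind B)
      have : ind (A ∪ B) = ind A + ind B := by
        ext x
        simp only [BoundedContinuousFunction.coe_add, Pi.add_apply, hindapp]
        rw [Set.indicator_union_of_disjoint hAB]
      rw [this, map_add]
    · intro 𝔤 A hA
      refine hνinv 𝔤 (ind A) (ind ((fun a => ρ a 𝔤) '' A)) ?_
      intro m
      rw [hindapp]
      have hsupp : Function.support (A.indicator (1 : M → ℝ)) = A := by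
        rw [Set.support_indicator]
        simp [Function.support_one]
      have hrw : ∑ᶠ mp ∈ (fun x => ρ x 𝔤) ⁻¹' {m}, (ind A) mp
          = ∑ᶠ mp ∈ (fun x => ρ x 𝔤) ⁻¹' {m} ∩ A, A.indicator (1 : M → ℝ) mp := by
        rw [show (∑ᶠ mp ∈ (fun x => ρ x 𝔤) ⁻¹' {m}, (ind A) mp)
            = ∑ᶠ mp ∈ (fun x => ρ x 𝔤) ⁻¹' {m}, A.indicator (1 : M → ℝ) mp from rfl]
        rw [← finsum_mem_inter_support, hsupp]
      rw [hrw]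
      by_cases hm : m ∈ (fun a => ρ a 𝔤) '' A
      · obtain ⟨a, haA, ham⟩ := hm
        have hset : (fun x => ρ x 𝔤) ⁻¹' {m} ∩ A = {a} := by
          ext y
          constructor
          · rintro ⟨hy1, hy2⟩
            exact hA hy2 haA ((Set.mem_singleton_iff.mp hy1).trans ham.symm)
          · rintro rfl
            exact ⟨ham, haA⟩
        rw [hset, finsum_mem_singleton]
        rw [Set.indicator_of_mem haA,
          Set.indicator_of_mem (show m ∈ (fun a => ρ a 𝔤) '' A from ⟨a, haA, ham⟩)]
        simp
      · have hset : (fun x => ρ x 𝔤) ⁻¹' {m} ∩ A = ∅ := by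
          ext y
          simp only [Set.mem_inter_iff, Set.mem_preimage, Set.mem_singleton_iff,
            Set.mem_empty_iff_false, iff_false, not_and]
          intro hy1 hy2
          exact hm ⟨y, hy2, hy1⟩
        rw [hset, finsum_mem_empty, Set.indicator_of_notMem hm]
end

section
/- Let G₀ be finite and let (F_i)_{i∈I} be a net of nonempty finite subsets of M. Then lim_{i∈I} |F_i \ (⇀𝔤)⁻¹(F_i)|/|F_i| = 0 for all 𝔤 ∈ G/G₀ if and only if lim_{i∈I} |(⇀𝔤)⁻¹(F_i) \ F_i|/|F_i| = 0 for all 𝔤 ∈ G/G₀. -/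
open MulAction Set Finset

section Aux

variable {G M : Type*} [Group G] [MulAction G M]
variable (m₀ : M) (gg : M → G)

/-- The right semi-action map. -/
def phiAux (g : G) (m : M) : M := (gg m * g) • m₀

lemma phiAux_fiber (hgg : ∀ m, gg m • m₀ = m) (g : G) (m m' : M)
    (h : phiAux m₀ gg g m' = phiAux m₀ gg g m) :
    ∃ t : MulAction.stabilizer G m₀, m' = (gg m * g * (t : G) * g⁻¹) • m₀ := by
  have hmem : ((gg m * g)⁻¹ * (gg m' * g)) ∈ MulAction.stabilizer G m₀ := by
    rw [MulAction.mem_stabilizer_iff, mul_smul]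
    unfold phiAux at h
    rw [h, inv_smul_smul]
  refine ⟨⟨_, hmem⟩, ?_⟩
  have : gg m * g * ((gg m * g)⁻¹ * (gg m' * g)) * g⁻¹ = gg m' := by group
  rw [this, hgg]

lemma phiAux_back (hgg : ∀ m, gg m • m₀ = m) (g : G) (m : M) :
    ∃ s : MulAction.stabilizer G m₀,
      phiAux m₀ gg ((g * s)⁻¹) (phiAux m₀ gg g m) = m := by
  set n := phiAux m₀ gg g m with hn
  have hmem : ((gg m * g)⁻¹ * gg n) ∈ MulAction.stabilizer G m₀ := by
    rw [MulAction.mem_stabilizer_iff, mul_smul]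
    rw [show gg n • m₀ = n from hgg n, hn]
    unfold phiAux
    rw [inv_smul_smul]
  refine ⟨⟨_, hmem⟩, ?_⟩
  unfold phiAux
  have : gg n * (g * ((gg m * g)⁻¹ * gg n))⁻¹ = gg m * g * g⁻¹ := by group
  rw [this, mul_inv_cancel_right, hgg]

variable [Fintype (MulAction.stabilizer G m₀)]

lemma phiAux_fiber_finite (hgg : ∀ m, gg m • m₀ = m) (g : G) (n : M) :
    {m : M | phiAux m₀ gg g m = n}.Finite := by
  by_cases h : ∃ m₁, phiAux m₀ gg g m₁ = n
  · obtain ⟨m₁, hm₁⟩ := h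
    apply Set.Finite.subset (Set.finite_range
      (fun t : MulAction.stabilizer G m₀ => (gg m₁ * g * (t : G) * g⁻¹) • m₀))
    intro m hm
    obtain ⟨t, ht⟩ := phiAux_fiber m₀ gg hgg g m₁ m (by rw [Set.mem_setOf_eq] at hm; rw [hm, hm₁])
    exact ⟨t, ht.symm⟩
  · have : {m : M | phiAux m₀ gg g m = n} = ∅ := by
      ext m; simp only [Set.mem_setOf_eq, Set.mem_empty_iff_false, iff_false]
      exact fun hc => h ⟨m, hc⟩
    rw [this]; exact Set.finite_empty

lemma phiAux_preimage_finite (hgg : ∀ m, gg m • m₀ = m) (g : G) (F : Set M) (hF : F.Finite) :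
    ((phiAux m₀ gg g) ⁻¹' F).Finite := by
  have : (phiAux m₀ gg g) ⁻¹' F = ⋃ n ∈ F, {m : M | phiAux m₀ gg g m = n} := by
    ext m; simp [Set.mem_preimage]
  rw [this]
  exact Set.Finite.biUnion hF (fun n _ => phiAux_fiber_finite m₀ gg hgg g n)

lemma card_fiber_le (hgg : ∀ m, gg m • m₀ = m) (g : G) (A : Set M) (hA : A.Finite) :
    A.ncard ≤ Fintype.card (MulAction.stabilizer G m₀) *
      ((phiAux m₀ gg g) '' A).ncard := by
  classical
  set f := phiAux m₀ gg g
  set s := hA.toFinset with hs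
  have hAs : A = ↑s := by simp [hs]
  have himg : f '' A = ↑(s.image f) := by rw [hAs]; simp
  rw [himg, hAs, Set.ncard_coe_finset, Set.ncard_coe_finset]
  apply Finset.card_le_mul_card_image
  intro b hb
  obtain ⟨a, _, hab⟩ := Finset.mem_image.mp hb
  apply le_trans (Finset.card_le_card (t := Finset.image
      (fun t : MulAction.stabilizer G m₀ => (gg a * g * (t : G) * g⁻¹) • m₀) Finset.univ) ?_)
  · exact le_trans (Finset.card_image_le) (by simp)
  · intro x hx
    rw [Finset.mem_filter] at hx
    obtain ⟨t, ht⟩ := phiAux_fiber m₀ gg hgg g a x (hx.2.trans hab.symm)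
    exact Finset.mem_image.mpr ⟨t, Finset.mem_univ _, ht.symm⟩

lemma ncard_iUnion_le' {ι : Type*} [Fintype ι] (B : ι → Set M) :
    (⋃ i, B i).ncard ≤ ∑ i, (B i).ncard := by
  classical
  have H : ∀ s : Finset ι, (⋃ i ∈ s, B i).ncard ≤ ∑ i ∈ s, (B i).ncard := by
    intro s
    induction s using Finset.induction with
    | empty => simp
    | @insert a s' ha ih =>
      rw [Finset.set_biUnion_insert, Finset.sum_insert ha]
      exact le_trans (Set.ncard_union_le _ _) (by gcongr)
  have : (⋃ i, B i) = ⋃ i ∈ Finset.univ, B i := by simp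
  rw [this]
  simpa using H Finset.univ

lemma key_card (hgg : ∀ m, gg m • m₀ = m) (g : G) (A : Set M) (hA : A.Finite)
    (B : MulAction.stabilizer G m₀ → Set M) (hBfin : ∀ t, (B t).Finite)
    (hmem : ∀ m ∈ A, ∃ t, phiAux m₀ gg g m ∈ B t) :
    A.ncard ≤ Fintype.card (MulAction.stabilizer G m₀) * ∑ t, (B t).ncard := by
  refine le_trans (card_fiber_le m₀ gg hgg g A hA) ?_
  apply Nat.mul_le_mul_left
  refine le_trans (le_trans (Set.ncard_le_ncard ?_ (Set.finite_iUnion hBfin))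
    (ncard_iUnion_le' B)) le_rfl
  rintro y ⟨m, hm, rfl⟩
  obtain ⟨t, ht⟩ := hmem m hm
  exact Set.mem_iUnion.mpr ⟨t, ht⟩

/-- Key estimate 1: preimage-minus bounded by minus-preimage terms. -/
lemma key1 (hgg : ∀ m, gg m • m₀ = m) (g : G) (F : Set M) (hF : F.Finite) :
    ((phiAux m₀ gg g) ⁻¹' F \ F).ncard ≤ Fintype.card (MulAction.stabilizer G m₀) *
      ∑ t : MulAction.stabilizer G m₀, (F \ (phiAux m₀ gg ((g * (t : G))⁻¹)) ⁻¹' F).ncard := by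
  apply key_card m₀ gg hgg g _ (Set.Finite.subset (phiAux_preimage_finite m₀ gg hgg g F hF)
    Set.diff_subset) _ (fun t => Set.Finite.subset hF Set.diff_subset)
  rintro m ⟨hm1, hm2⟩
  obtain ⟨s, hs⟩ := phiAux_back m₀ gg hgg g m
  exact ⟨s, hm1, fun hc => hm2 (by rwa [Set.mem_preimage, hs] at hc)⟩

/-- Key estimate 2: minus-preimage bounded by preimage-minus terms. -/
lemma key2 (hgg : ∀ m, gg m • m₀ = m) (g : G) (F : Set M) (hF : F.Finite) :
    (F \ (phiAux m₀ gg g) ⁻¹' F).ncard ≤ Fintype.card (MulAction.stabilizer G m₀) *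
      ∑ t : MulAction.stabilizer G m₀, ((phiAux m₀ gg ((g * (t : G))⁻¹)) ⁻¹' F \ F).ncard := by
  apply key_card m₀ gg hgg g _ (Set.Finite.subset hF Set.diff_subset) _
    (fun t => Set.Finite.subset (phiAux_preimage_finite m₀ gg hgg _ F hF) Set.diff_subset)
  rintro m ⟨hm1, hm2⟩
  obtain ⟨s, hs⟩ := phiAux_back m₀ gg hgg g m
  refine ⟨s, Set.mem_preimage.mpr (by rw [hs]; exact hm1), fun hc => hm2 hc⟩

end Aux

lemma directed_finset_bound {I : Type*} [Nonempty I] (r : I → I → Prop)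
    (htr : Transitive r) (hdir : ∀ i j : I, ∃ k : I, r i k ∧ r j k)
    {α : Type*} (s : Finset α) (f : α → I) :
    ∃ j : I, ∀ x ∈ s, r (f x) j := by
  classical
  induction s using Finset.induction with
  | empty => exact ⟨Classical.arbitrary I, by simp⟩
  | @insert a s' ha ih =>
    obtain ⟨j, hj⟩ := ih
    obtain ⟨k, hk1, hk2⟩ := hdir (f a) j
    refine ⟨k, fun x hx => ?_⟩
    rcases Finset.mem_insert.mp hx with rfl | hx
    · exact hk1
    · exact htr (hj x hx) hk2

theorem stmt12 {G M : Type*} [Group G] [MulAction G M]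
    (htrans : ∀ m mp : M, ∃ g : G, g • m = mp)
    (m₀ : M) (gg : M → G) (hgg : ∀ m, gg m • m₀ = m)
    (ρ : M → G ⧸ MulAction.stabilizer G m₀ → M)
    (hρ : ∀ (m : M) (g : G), ρ m (g : G ⧸ MulAction.stabilizer G m₀) = (gg m * g) • m₀)
    [Finite (MulAction.stabilizer G m₀)]
    {I : Type*} (r : I → I → Prop) (hrefl : Reflexive r) (htr : Transitive r)
    (hdir : ∀ i j : I, ∃ k : I, r i k ∧ r j k) [Nonempty I]
    (F : I → Set M) (hFne : ∀ i, (F i).Nonempty) (hFfin : ∀ i, (F i).Finite) :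
    (∀ 𝔤 : G ⧸ MulAction.stabilizer G m₀, ∀ ε > (0 : ℝ), ∃ i₀ : I, ∀ i : I, r i₀ i →
      ((F i \ (fun m => ρ m 𝔤) ⁻¹' (F i)).ncard : ℝ) / (F i).ncard < ε)
    ↔
    (∀ 𝔤 : G ⧸ MulAction.stabilizer G m₀, ∀ ε > (0 : ℝ), ∃ i₀ : I, ∀ i : I, r i₀ i →
      (((fun m => ρ m 𝔤) ⁻¹' (F i) \ F i).ncard : ℝ) / (F i).ncard < ε) := by
  classical
  haveI : Fintype (MulAction.stabilizer G m₀) := Fintype.ofFinite _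
  set n₀ := Fintype.card (MulAction.stabilizer G m₀) with hn₀def
  have hn₀pos : 0 < n₀ := Fintype.card_pos
  have hρφ : ∀ g : G, (fun m => ρ m (g : G ⧸ MulAction.stabilizer G m₀)) = phiAux m₀ gg g := by
    intro g; funext m; rw [hρ m g]; rfl
  have hcpos : ∀ i, (0 : ℝ) < ((F i).ncard : ℝ) := by
    intro i
    exact_mod_cast (Set.ncard_pos (hFfin i)).mpr (hFne i)
  -- generic epsilon bookkeeping
  have main : ∀ (a b : (G ⧸ MulAction.stabilizer G m₀) → I → ℕ) (σ : (G ⧸ MulAction.stabilizer G m₀) → MulAction.stabilizer G m₀ → (G ⧸ MulAction.stabilizer G m₀)) (𝔤 : G ⧸ MulAction.stabilizer G m₀),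
      (∀ i, (b 𝔤 i : ℝ) ≤ n₀ * ∑ t, (a (σ 𝔤 t) i : ℝ)) →
      (∀ q, ∀ ε > (0:ℝ), ∃ i₀, ∀ i, r i₀ i → (a q i : ℝ) / (F i).ncard < ε) →
      ∀ ε > (0:ℝ), ∃ i₀, ∀ i, r i₀ i → (b 𝔤 i : ℝ) / (F i).ncard < ε := by
    intro a b σ 𝔤 hkey ha ε hε
    set ε' : ℝ := ε / (n₀ * n₀ + 1) with hε'def
    have hε'pos : 0 < ε' := by positivity
    choose i₀f hi₀f using fun t : MulAction.stabilizer G m₀ => ha (σ 𝔤 t) ε' hε'pos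
    obtain ⟨j, hj⟩ := directed_finset_bound r htr hdir Finset.univ i₀f
    refine ⟨j, fun i hi => ?_⟩
    have hterm : ∀ t : MulAction.stabilizer G m₀, (a (σ 𝔤 t) i : ℝ) / (F i).ncard < ε' :=
      fun t => hi₀f t i (htr (hj t (Finset.mem_univ t)) hi)
    have h1 : (b 𝔤 i : ℝ) / (F i).ncard ≤ n₀ * ∑ t : MulAction.stabilizer G m₀, (a (σ 𝔤 t) i : ℝ) / (F i).ncard := by
      rw [← Finset.sum_div, ← mul_div_assoc]
      gcongr
      exact hkey i
    have h2 : (n₀ : ℝ) * ∑ t : MulAction.stabilizer G m₀, (a (σ 𝔤 t) i : ℝ) / (F i).ncard ≤ n₀ * (n₀ * ε') := by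
      apply mul_le_mul_of_nonneg_left _ (by positivity)
      calc ∑ t : MulAction.stabilizer G m₀, (a (σ 𝔤 t) i : ℝ) / (F i).ncard
          ≤ ∑ _t : MulAction.stabilizer G m₀, ε' := Finset.sum_le_sum (fun t _ => le_of_lt (hterm t))
        _ = n₀ * ε' := by rw [Finset.sum_const]; simp [hn₀def, nsmul_eq_mul]
    have h3 : (n₀ : ℝ) * (n₀ * ε') < ε := by
      rw [hε'def]
      rw [show (n₀:ℝ) * (n₀ * (ε / (n₀*n₀+1))) = (n₀*n₀) * ε / (n₀*n₀+1) by ring]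
      rw [div_lt_iff₀ (by positivity)]
      have : (0:ℝ) < n₀*n₀+1 := by positivity
      nlinarith [hε]
    linarith [h1.trans h2]
  constructor
  · -- minus-preimage small → preimage-minus small
    intro h1 𝔤
    obtain ⟨g, rfl⟩ := QuotientGroup.mk_surjective 𝔤
    have hkey : ∀ i, ((((fun m => ρ m (g : G ⧸ MulAction.stabilizer G m₀)) ⁻¹' (F i) \ F i).ncard : ℕ) : ℝ) ≤
        n₀ * ∑ t : MulAction.stabilizer G m₀, (((F i \ (fun m => ρ m (((g * (t:G))⁻¹ : G) : G ⧸ MulAction.stabilizer G m₀)) ⁻¹' (F i)).ncard : ℕ) : ℝ) := by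
      intro i
      have := key1 m₀ gg hgg g (F i) (hFfin i)
      rw [hρφ g]
      have heq : ∀ t : MulAction.stabilizer G m₀, (fun m => ρ m (((g * (t:G))⁻¹ : G) : G ⧸ MulAction.stabilizer G m₀)) = phiAux m₀ gg ((g * (t:G))⁻¹) :=
        fun t => hρφ _
      calc ((((phiAux m₀ gg g) ⁻¹' (F i) \ F i).ncard : ℕ) : ℝ)
          ≤ ((n₀ * ∑ t : MulAction.stabilizer G m₀, (F i \ (phiAux m₀ gg ((g * (t:G))⁻¹)) ⁻¹' (F i)).ncard : ℕ) : ℝ) := by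
            exact_mod_cast this
        _ = n₀ * ∑ t : MulAction.stabilizer G m₀, (((F i \ (fun m => ρ m (((g * (t:G))⁻¹ : G) : G ⧸ MulAction.stabilizer G m₀)) ⁻¹' (F i)).ncard : ℕ) : ℝ) := by
            push_cast
            congr 1
            apply Finset.sum_congr rfl
            intro t _
            rw [heq t]
    exact main (fun q i => (F i \ (fun m => ρ m q) ⁻¹' (F i)).ncard)
      (fun q i => ((fun m => ρ m q) ⁻¹' (F i) \ F i).ncard)
      (fun q t => ((g * (t:G))⁻¹ : G))
      (g : G ⧸ MulAction.stabilizer G m₀) hkey h1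
  · -- preimage-minus small → minus-preimage small
    intro h2 𝔤
    obtain ⟨g, rfl⟩ := QuotientGroup.mk_surjective 𝔤
    have hkey : ∀ i, (((F i \ (fun m => ρ m (g : G ⧸ MulAction.stabilizer G m₀)) ⁻¹' (F i)).ncard : ℕ) : ℝ) ≤
        n₀ * ∑ t : MulAction.stabilizer G m₀, ((((fun m => ρ m (((g * (t:G))⁻¹ : G) : G ⧸ MulAction.stabilizer G m₀)) ⁻¹' (F i) \ F i).ncard : ℕ) : ℝ) := by
      intro i
      have := key2 m₀ gg hgg g (F i) (hFfin i)
      rw [hρφ g]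
      have heq : ∀ t : MulAction.stabilizer G m₀, (fun m => ρ m (((g * (t:G))⁻¹ : G) : G ⧸ MulAction.stabilizer G m₀)) = phiAux m₀ gg ((g * (t:G))⁻¹) :=
        fun t => hρφ _
      calc (((F i \ (phiAux m₀ gg g) ⁻¹' (F i)).ncard : ℕ) : ℝ)
          ≤ ((n₀ * ∑ t : MulAction.stabilizer G m₀, ((phiAux m₀ gg ((g * (t:G))⁻¹)) ⁻¹' (F i) \ F i).ncard : ℕ) : ℝ) := by
            exact_mod_cast this
        _ = n₀ * ∑ t : MulAction.stabilizer G m₀, ((((fun m => ρ m (((g * (t:G))⁻¹ : G) : G ⧸ MulAction.stabilizer G m₀)) ⁻¹' (F i) \ F i).ncard : ℕ) : ℝ) := by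
            push_cast
            congr 1
            apply Finset.sum_congr rfl
            intro t _
            rw [heq t]
    exact main (fun q i => ((fun m => ρ m q) ⁻¹' (F i) \ F i).ncard)
      (fun q i => (F i \ (fun m => ρ m q) ⁻¹' (F i)).ncard)
      (fun q t => ((g * (t:G))⁻¹ : G))
      (g : G ⧸ MulAction.stabilizer G m₀) hkey h2
end

section
/- Let G₀ be finite and suppose there is a right Følner net (F_i)_{i∈I} in the cell space. Then the cell space is right amenable, i.e. there exists a finitely additive probability measure μ on 𝒫(M) with μ(A ⇀ 𝔤) = μ(A) for every 𝔤 ∈ G/G₀ and every A ⊆ M on which ⇀𝔤 is injective. -/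
open Filter Set Topology

private lemma ncard_biUnion_le_sum {ι α : Type*} (s : Finset ι) (f : ι → Set α) :
    (⋃ i ∈ s, f i).ncard ≤ ∑ i ∈ s, (f i).ncard := by
  classical
  induction s using Finset.induction_on with
  | empty => simp
  | @insert a s ha ih =>
    rw [Finset.set_biUnion_insert, Finset.sum_insert ha]
    exact (Set.ncard_union_le _ _).trans (Nat.add_le_add_left ih _)

theorem stmt14 {G M : Type*} [Group G] [MulAction G M]
    (htrans : ∀ m mp : M, ∃ g : G, g • m = mp)
    (m₀ : M) (gg : M → G) (hgg : ∀ m, gg m • m₀ = m)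
    (ρ : M → G ⧸ MulAction.stabilizer G m₀ → M)
    (hρ : ∀ (m : M) (g : G), ρ m (g : G ⧸ MulAction.stabilizer G m₀) = (gg m * g) • m₀)
    [Finite (MulAction.stabilizer G m₀)]
    {I : Type*} (r : I → I → Prop) (hrefl : Reflexive r) (htr : Transitive r)
    (hdir : ∀ i j : I, ∃ k : I, r i k ∧ r j k) [Nonempty I]
    (F : I → Set M) (hFne : ∀ i, (F i).Nonempty) (hFfin : ∀ i, (F i).Finite)
    (hFol : ∀ 𝔤 : G ⧸ MulAction.stabilizer G m₀, ∀ ε > (0 : ℝ), ∃ i₀ : I, ∀ i : I, r i₀ i →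
      ((F i \ (fun m => ρ m 𝔤) ⁻¹' (F i)).ncard : ℝ) / (F i).ncard < ε) :
    ∃ μ : Set M → ℝ,
      (∀ A : Set M, 0 ≤ μ A ∧ μ A ≤ 1) ∧ μ Set.univ = 1 ∧
      (∀ A B : Set M, Disjoint A B → μ (A ∪ B) = μ A + μ B) ∧
      (∀ (𝔤 : G ⧸ MulAction.stabilizer G m₀) (A : Set M),
        Set.InjOn (fun m => ρ m 𝔤) A → μ ((fun a => ρ a 𝔤) '' A) = μ A) := by
  classical
  -- the "section" filter of the directed set (I, r)
  let 𝓕 : Filter I := ⨅ i₀, Filter.principal {i | r i₀ i}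
  have hdir' : Directed (· ≥ ·) (fun i₀ => Filter.principal {i | r i₀ i}) := by
    intro i j
    obtain ⟨k, hik, hjk⟩ := hdir i j
    exact ⟨k, Filter.principal_mono.2 fun x hx => htr hik hx,
      Filter.principal_mono.2 fun x hx => htr hjk hx⟩
  have h𝓕ne : 𝓕.NeBot :=
    Filter.iInf_neBot_of_directed' hdir'
      (fun i₀ => Filter.principal_neBot_iff.2 ⟨i₀, hrefl i₀⟩)
  have hsec : ∀ i₀, {i | r i₀ i} ∈ 𝓕 := fun i₀ =>
    Filter.mem_iInf_of_mem i₀ (Filter.mem_principal_self _)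
  -- the Følner ratio functions
  set e : (G ⧸ MulAction.stabilizer G m₀) → I → ℝ :=
    fun 𝔥 i => ((F i \ (fun m => ρ m 𝔥) ⁻¹' (F i)).ncard : ℝ) / (F i).ncard with he
  have he0 : ∀ 𝔥 i, 0 ≤ e 𝔥 i := fun 𝔥 i => div_nonneg (Nat.cast_nonneg _) (Nat.cast_nonneg _)
  have hetend : ∀ 𝔥, Filter.Tendsto (e 𝔥) 𝓕 (𝓝 0) := by
    intro 𝔥
    refine tendsto_order.2 ⟨fun a ha => ?_, fun a ha => ?_⟩
    · exact Filter.Eventually.of_forall fun i => lt_of_lt_of_le ha (he0 𝔥 i)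
    · obtain ⟨i₀, hi₀⟩ := hFol 𝔥 a ha
      exact Filter.mem_of_superset (hsec i₀) fun i hi => hi₀ i hi
  -- choose an ultrafilter refining 𝓕
  obtain ⟨U, hU⟩ := Ultrafilter.exists_le 𝓕
  have hncard_pos : ∀ i, 0 < ((F i).ncard : ℝ) := fun i =>
    Nat.cast_pos.2 ((Set.ncard_pos (hFfin i)).2 (hFne i))
  set f : Set M → I → ℝ := fun A i => (((F i) ∩ A).ncard : ℝ) / (F i).ncard with hf
  have hf01 : ∀ A i, f A i ∈ Set.Icc (0:ℝ) 1 := by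
    intro A i
    refine ⟨div_nonneg (Nat.cast_nonneg _) (Nat.cast_nonneg _), ?_⟩
    rw [div_le_one (hncard_pos i)]
    exact_mod_cast Set.ncard_le_ncard Set.inter_subset_left (hFfin i)
  have hex : ∀ A : Set M, ∃ x, x ∈ Set.Icc (0:ℝ) 1 ∧ Filter.Tendsto (f A) (↑U) (𝓝 x) := by
    intro A
    have hmem : Set.Icc (0:ℝ) 1 ∈ Ultrafilter.map (f A) U :=
      Filter.mem_map.2 (Filter.univ_mem' fun i => hf01 A i)
    obtain ⟨x, hx, hle⟩ := isCompact_Icc.ultrafilter_le_nhds (Ultrafilter.map (f A) U)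
      (Filter.le_principal_iff.2 hmem)
    exact ⟨x, hx, by rwa [Ultrafilter.coe_map] at hle⟩
  choose μ hmem htend using hex
  refine ⟨μ, fun A => ⟨(hmem A).1, (hmem A).2⟩, ?_, ?_, ?_⟩
  · -- μ univ = 1
    have h1 : Filter.Tendsto (f Set.univ) (↑U) (𝓝 1) := by
      have : f Set.univ = fun _ => (1:ℝ) := by
        funext i
        simp only [hf, Set.inter_univ]
        exact div_self (hncard_pos i).ne'
      rw [this]; exact tendsto_const_nhds
    exact tendsto_nhds_unique (htend Set.univ) h1
  · -- finite additivity
    intro A B hAB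
    have heq : ∀ i, f (A ∪ B) i = f A i + f B i := by
      intro i
      have hd : Disjoint (F i ∩ A) (F i ∩ B) :=
        hAB.mono Set.inter_subset_right Set.inter_subset_right
      simp only [hf]
      rw [Set.inter_union_distrib_left,
        Set.ncard_union_eq hd ((hFfin i).inter_of_left _) ((hFfin i).inter_of_left _),
        Nat.cast_add, add_div]
    have h2 : Filter.Tendsto (f (A ∪ B)) (↑U) (𝓝 (μ A + μ B)) :=
      ((htend A).add (htend B)).congr fun i => (heq i).symm
    exact tendsto_nhds_unique (htend (A ∪ B)) h2
  · -- semi-invariance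
    intro 𝔤 A hinj
    have := Fintype.ofFinite (MulAction.stabilizer G m₀)
    set g : G := 𝔤.out with hgdef
    have hgq : ((g : G) : G ⧸ MulAction.stabilizer G m₀) = 𝔤 := QuotientGroup.out_eq' 𝔤
    set T : M → M := fun m => ρ m 𝔤 with hT
    have hTval : ∀ m, T m = (gg m * g) • m₀ := by
      intro m; rw [hT]; simp only; rw [← hgq, hρ]
    set A' : Set M := T '' A with hA'
    set c : MulAction.stabilizer G m₀ → G ⧸ MulAction.stabilizer G m₀ :=
      fun u => (((u : G) * g⁻¹ : G) : G ⧸ MulAction.stabilizer G m₀) with hc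
    set d : I → ℝ := fun i => (∑ u : MulAction.stabilizer G m₀, e (c u) i) + e 𝔤 i with hd
    have hdtend : Filter.Tendsto d 𝓕 (𝓝 0) := by
      have hsum : Filter.Tendsto (fun i => ∑ u : MulAction.stabilizer G m₀, e (c u) i) 𝓕
          (𝓝 0) := by
        have := tendsto_finset_sum (Finset.univ : Finset (MulAction.stabilizer G m₀))
          (fun u _ => hetend (c u))
        simpa using this
      simpa using hsum.add (hetend 𝔤)
    have key : ∀ i, |f A' i - f A i| ≤ d i := by
      intro i
      have hFi := hFfin i
      -- inequality (a): |F∩A| ≤ |F∩A'| + |F \ T⁻¹F|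
      have ha : (F i ∩ A).ncard ≤ (F i ∩ A').ncard + (F i \ T ⁻¹' (F i)).ncard := by
        have hsub : F i ∩ A ⊆ ((F i ∩ A) ∩ T ⁻¹' (F i)) ∪ (F i \ T ⁻¹' (F i)) := by
          intro m hm
          by_cases hmT : m ∈ T ⁻¹' (F i)
          · exact Or.inl ⟨hm, hmT⟩
          · exact Or.inr ⟨hm.1, hmT⟩
        have h1 : (F i ∩ A).ncard ≤
            ((F i ∩ A) ∩ T ⁻¹' (F i)).ncard + (F i \ T ⁻¹' (F i)).ncard :=
          le_trans (Set.ncard_le_ncard hsub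
            ((((hFi.inter_of_left _).inter_of_left _)).union (hFi.diff)))
            (Set.ncard_union_le _ _)
        have h2 : ((F i ∩ A) ∩ T ⁻¹' (F i)).ncard ≤ (F i ∩ A').ncard := by
          have himg : T '' ((F i ∩ A) ∩ T ⁻¹' (F i)) ⊆ F i ∩ A' := by
            rintro x ⟨m, ⟨⟨hmF, hmA⟩, hmT⟩, rfl⟩
            exact ⟨hmT, ⟨m, hmA, rfl⟩⟩
          calc ((F i ∩ A) ∩ T ⁻¹' (F i)).ncard
              = (T '' ((F i ∩ A) ∩ T ⁻¹' (F i))).ncard :=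
                (Set.ncard_image_of_injOn (hinj.mono (fun m hm => hm.1.2))).symm
            _ ≤ (F i ∩ A').ncard := Set.ncard_le_ncard himg (hFi.inter_of_left _)
        omega
      -- inequality (b): |F∩A'| ≤ |F∩A| + ∑_u |F \ (⇀u g⁻¹)⁻¹ F|
      have hb : (F i ∩ A').ncard ≤ (F i ∩ A).ncard +
          ∑ u : MulAction.stabilizer G m₀,
            (F i \ (fun m => ρ m (c u)) ⁻¹' (F i)).ncard := by
        have hsub : F i ∩ A' ⊆ (T '' (F i ∩ A)) ∪
            ⋃ u ∈ (Finset.univ : Finset (MulAction.stabilizer G m₀)),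
              (F i \ (fun m => ρ m (c u)) ⁻¹' (F i)) := by
          rintro x ⟨hxF, m, hmA, rfl⟩
          by_cases hm : m ∈ F i
          · exact Or.inl ⟨m, ⟨hm, hmA⟩, rfl⟩
          · right
            have hu : ((gg (T m))⁻¹ * gg m * g) ∈ MulAction.stabilizer G m₀ := by
              rw [MulAction.mem_stabilizer_iff]
              have h₁ : (gg m * g) • m₀ = T m := (hTval m).symm
              calc ((gg (T m))⁻¹ * gg m * g) • m₀
                  = (gg (T m))⁻¹ • ((gg m * g) • m₀) := by
                    rw [mul_assoc, mul_smul]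
                _ = (gg (T m))⁻¹ • (gg (T m) • m₀) := by rw [h₁, hgg]
                _ = m₀ := inv_smul_smul _ _
            refine Set.mem_biUnion (Finset.mem_univ (⟨_, hu⟩ : MulAction.stabilizer G m₀))
              ⟨hxF, ?_⟩
            intro hcontra
            apply hm
            have hval : ρ (T m) (c ⟨_, hu⟩) = m := by
              simp only [hc]
              rw [hρ]
              have h₂ : gg (T m) * ((gg (T m))⁻¹ * gg m * g * g⁻¹) = gg m := by group
              rw [h₂, hgg]
            simpa [hval] using hcontra
        have hfinU : (⋃ u ∈ (Finset.univ : Finset (MulAction.stabilizer G m₀)),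
            (F i \ (fun m => ρ m (c u)) ⁻¹' (F i))).Finite :=
          Set.Finite.biUnion (Finset.univ : Finset (MulAction.stabilizer G m₀)).finite_toSet
            (fun u _ => hFi.diff)
        have h1 : (F i ∩ A').ncard ≤ (T '' (F i ∩ A)).ncard +
            (⋃ u ∈ (Finset.univ : Finset (MulAction.stabilizer G m₀)),
              (F i \ (fun m => ρ m (c u)) ⁻¹' (F i))).ncard :=
          le_trans (Set.ncard_le_ncard hsub
            (((hFi.inter_of_left _).image T).union hfinU)) (Set.ncard_union_le _ _)
        have h2 : (T '' (F i ∩ A)).ncard ≤ (F i ∩ A).ncard :=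
          Set.ncard_image_le (hFi.inter_of_left _)
        have h3 := ncard_biUnion_le_sum (Finset.univ : Finset (MulAction.stabilizer G m₀))
          (fun u => (F i \ (fun m => ρ m (c u)) ⁻¹' (F i)))
        omega
      -- pass to real ratios
      have hnpos : (0:ℝ) < ((F i).ncard : ℝ) := hncard_pos i
      have hbR : ((F i ∩ A').ncard : ℝ) ≤ ((F i ∩ A).ncard : ℝ) +
          ∑ u : MulAction.stabilizer G m₀,
            ((F i \ (fun m => ρ m (c u)) ⁻¹' (F i)).ncard : ℝ) := by
        exact_mod_cast hb
      have haR : ((F i ∩ A).ncard : ℝ) ≤ ((F i ∩ A').ncard : ℝ) +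
          ((F i \ T ⁻¹' (F i)).ncard : ℝ) := by exact_mod_cast ha
      have hnb0 : (0:ℝ) ≤ ((F i \ T ⁻¹' (F i)).ncard : ℝ) := Nat.cast_nonneg _
      have hnS0 : (0:ℝ) ≤ ∑ u : MulAction.stabilizer G m₀,
          ((F i \ (fun m => ρ m (c u)) ⁻¹' (F i)).ncard : ℝ) :=
        Finset.sum_nonneg fun u _ => Nat.cast_nonneg _
      have habs : |f A' i - f A i| =
          |((F i ∩ A').ncard : ℝ) - ((F i ∩ A).ncard : ℝ)| / ((F i).ncard : ℝ) := by
        simp only [hf]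
        rw [div_sub_div_same, abs_div, abs_of_pos hnpos]
      have hdval : d i = ((∑ u : MulAction.stabilizer G m₀,
          ((F i \ (fun m => ρ m (c u)) ⁻¹' (F i)).ncard : ℝ)) +
          ((F i \ T ⁻¹' (F i)).ncard : ℝ)) / ((F i).ncard : ℝ) := by
        simp only [hd, he, ← hT]
        rw [add_div, Finset.sum_div]
      rw [habs, hdval]
      gcongr
      · exact abs_le.2 ⟨by linarith, by linarith⟩
    -- conclude by uniqueness of ultrafilter limits
    have hkey : Filter.Tendsto (fun i => f A' i - f A i) (↑U) (𝓝 0) :=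
      squeeze_zero_norm (fun i => by rw [Real.norm_eq_abs]; exact key i)
        (hdtend.mono_left hU)
    have h6 : Filter.Tendsto (f A') (↑U) (𝓝 (μ A + 0)) :=
      ((htend A).add hkey).congr (fun i => by ring)
    have h5 := tendsto_nhds_unique (htend A') h6
    rw [add_zero] at h5
    exact h5
end

section
/- Let G₀ be finite and suppose there exists a right paradoxical decomposition of the cell space: a finite subset E of G/G₀ and families (A_e)_{e∈E}, (B_e)_{e∈E} of subsets of M such that for each e the map ⇀e is injective on A_e and on B_e, and M = ⨆_{e∈E} A_e = ⨆_{e∈E} B_e = (⨆_{e∈E} A_e ⇀ e) ⊔ (⨆_{e∈E} B_e ⇀ e) (all unions disjoint). Then there is no finitely additive probability measure μ on 𝒫(M) with μ(A ⇀ 𝔤) = μ(A) for all 𝔤 and all A on which ⇀𝔤 is injective. -/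
lemma sum_union_aux {α M : Type*} [DecidableEq α] (μ : Set M → ℝ)
    (hadd : ∀ S T : Set M, Disjoint S T → μ (S ∪ T) = μ S + μ T)
    (hμ0 : μ ∅ = 0) :
    ∀ (E : Finset α) (f : α → Set M),
      (E : Set α).PairwiseDisjoint f →
      μ (⋃ e ∈ E, f e) = ∑ e ∈ E, μ (f e) := by
  intro E
  induction E using Finset.induction_on with
  | empty => intro f _; simpa using hμ0
  | @insert a s ha ih =>
    intro f hd
    have hd' : (s : Set α).PairwiseDisjoint f :=
      hd.subset (by simp [Set.subset_insert])
    have hdis : Disjoint (f a) (⋃ e ∈ s, f e) := by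
      rw [Set.disjoint_iUnion_right]
      intro e
      rw [Set.disjoint_iUnion_right]
      intro he
      exact hd (by simp) (by simp [he]) (by rintro rfl; exact ha he)
    rw [Finset.set_biUnion_insert, hadd _ _ hdis, ih f hd', Finset.sum_insert ha]

theorem stmt15 {G M : Type*} [Group G] [MulAction G M]
    (htrans : ∀ m mp : M, ∃ g : G, g • m = mp)
    (m₀ : M) (gg : M → G) (hgg : ∀ m, gg m • m₀ = m)
    (ρ : M → G ⧸ MulAction.stabilizer G m₀ → M)
    (hρ : ∀ (m : M) (g : G), ρ m (g : G ⧸ MulAction.stabilizer G m₀) = (gg m * g) • m₀)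
    [Finite (MulAction.stabilizer G m₀)]
    (E : Finset (G ⧸ MulAction.stabilizer G m₀))
    (A B : G ⧸ MulAction.stabilizer G m₀ → Set M)
    (hinj : ∀ e ∈ E, Set.InjOn (fun m => ρ m e) (A e) ∧ Set.InjOn (fun m => ρ m e) (B e))
    (hAcov : (⋃ e ∈ E, A e) = Set.univ)
    (hAdis : (E : Set (G ⧸ MulAction.stabilizer G m₀)).PairwiseDisjoint A)
    (hBcov : (⋃ e ∈ E, B e) = Set.univ)
    (hBdis : (E : Set (G ⧸ MulAction.stabilizer G m₀)).PairwiseDisjoint B)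
    (hIcov : ((⋃ e ∈ E, (fun a => ρ a e) '' A e) ∪ (⋃ e ∈ E, (fun a => ρ a e) '' B e))
      = Set.univ)
    (hIAdis : (E : Set (G ⧸ MulAction.stabilizer G m₀)).PairwiseDisjoint
      (fun e => (fun a => ρ a e) '' A e))
    (hIBdis : (E : Set (G ⧸ MulAction.stabilizer G m₀)).PairwiseDisjoint
      (fun e => (fun a => ρ a e) '' B e))
    (hcross : Disjoint (⋃ e ∈ E, (fun a => ρ a e) '' A e)
      (⋃ e ∈ E, (fun a => ρ a e) '' B e)) :
    ¬ ∃ μ : Set M → ℝ,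
      (∀ S : Set M, 0 ≤ μ S ∧ μ S ≤ 1) ∧ μ Set.univ = 1 ∧
      (∀ S T : Set M, Disjoint S T → μ (S ∪ T) = μ S + μ T) ∧
      (∀ (𝔤 : G ⧸ MulAction.stabilizer G m₀) (S : Set M),
        Set.InjOn (fun m => ρ m 𝔤) S → μ ((fun a => ρ a 𝔤) '' S) = μ S) := by
  classical
  rintro ⟨μ, _hbd, huniv, hadd, hsemi⟩
  have hμ0 : μ ∅ = 0 := by
    have := hadd ∅ ∅ (by simp)
    simp at this
    linarith
  have hA : ∑ e ∈ E, μ (A e) = 1 := by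
    rw [← sum_union_aux μ hadd hμ0 E A hAdis, hAcov, huniv]
  have hB : ∑ e ∈ E, μ (B e) = 1 := by
    rw [← sum_union_aux μ hadd hμ0 E B hBdis, hBcov, huniv]
  have hIA : μ (⋃ e ∈ E, (fun a => ρ a e) '' A e) = 1 := by
    rw [sum_union_aux μ hadd hμ0 E _ hIAdis]
    rw [Finset.sum_congr rfl (fun e he => hsemi e (A e) (hinj e he).1), hA]
  have hIB : μ (⋃ e ∈ E, (fun a => ρ a e) '' B e) = 1 := by
    rw [sum_union_aux μ hadd hμ0 E _ hIBdis]
    rw [Finset.sum_congr rfl (fun e he => hsemi e (B e) (hinj e he).2), hB]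
  have := hadd _ _ hcross
  rw [hIcov, huniv, hIA, hIB] at this
  linarith
end

section
/- Let G₀ be finite and suppose there is a finite subset E of G/G₀ with G₀ ∈ E such that |F ⇀ E| ≥ 2|F| for every finite subset F of M. Then there exists a 2-to-1 surjective map φ : M → M and a finite subset E' of G/G₀ such that for every m ∈ M there is e ∈ E' with φ(m) ⇀ e = m. -/
/-- Schröder–Bernstein along a relation: if there are injections in both
directions respecting a relation `R`, then there is a bijection `h` with
`R a (h a)` for all `a`. -/
lemma csb_rel {A B : Type*} (R : A → B → Prop) (f : A → B) (g : B → A)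
    (hf : Function.Injective f) (hg : Function.Injective g)
    (hRf : ∀ a, R a (f a)) (hRg : ∀ b, R (g b) b) :
    ∃ h : A → B, Function.Bijective h ∧ ∀ a, R a (h a) := by
  classical
  rcases isEmpty_or_nonempty B with hB | hB
  · exact ⟨f, ⟨hf, fun b => hB.elim b⟩, hRf⟩
  set F : Set A →o Set A :=
    ⟨fun s => (g '' (f '' s)ᶜ)ᶜ, by
      intro s t hst
      exact Set.compl_subset_compl.2
        (Set.image_mono (Set.compl_subset_compl.2 (Set.image_mono hst)))⟩ with hF
  set S : Set A := OrderHom.lfp F with hSdef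
  have hS : (g '' (f '' S)ᶜ)ᶜ = S := OrderHom.map_lfp F
  have hmem : ∀ a ∉ S, ∃ b, b ∉ f '' S ∧ g b = a := by
    intro a ha
    have : a ∈ g '' (f '' S)ᶜ := by
      by_contra h
      exact ha (hS ▸ h)
    obtain ⟨b, hb, hgb⟩ := this
    exact ⟨b, hb, hgb⟩
  set h : A → B := fun a => if a ∈ S then f a else Function.invFun g a with hhdef
  have hout : ∀ a ∉ S, h a ∉ f '' S ∧ g (h a) = a := by
    intro a ha
    obtain ⟨b, hb, hgb⟩ := hmem a ha
    have : h a = b := by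
      simp only [hhdef, if_neg ha]
      rw [← hgb, Function.leftInverse_invFun hg]
    rw [this]
    exact ⟨hb, hgb⟩
  have hin : ∀ a ∈ S, h a = f a := fun a ha => by simp [hhdef, if_pos ha]
  refine ⟨h, ⟨?_, ?_⟩, ?_⟩
  · intro a1 a2 he
    by_cases h1 : a1 ∈ S <;> by_cases h2 : a2 ∈ S
    · exact hf (by rwa [hin a1 h1, hin a2 h2] at he)
    · exact absurd (⟨a1, h1, by rw [← hin a1 h1, he]⟩ : h a2 ∈ f '' S) (hout a2 h2).1
    · exact absurd (⟨a2, h2, by rw [← hin a2 h2, ← he]⟩ : h a1 ∈ f '' S) (hout a1 h1).1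
    · rw [← (hout a1 h1).2, ← (hout a2 h2).2, he]
  · intro b
    by_cases hb : b ∈ f '' S
    · obtain ⟨a, ha, hab⟩ := hb
      exact ⟨a, by rw [hin a ha, hab]⟩
    · have hgb : g b ∉ S := by
        rw [← hS]
        simp only [Set.mem_compl_iff, not_not]
        exact ⟨b, hb, rfl⟩
      refine ⟨g b, ?_⟩
      have := (hout (g b) hgb).2
      exact hg this
  · intro a
    by_cases ha : a ∈ S
    · rw [hin a ha]; exact hRf a
    · have := (hout a ha).2
      have := hRg (h a)
      rwa [(hout a ha).2] at this

theorem stmt16 {G M : Type*} [Group G] [MulAction G M]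
    (htrans : ∀ m mp : M, ∃ g : G, g • m = mp)
    (m₀ : M) (gg : M → G) (hgg : ∀ m, gg m • m₀ = m)
    (ρ : M → G ⧸ MulAction.stabilizer G m₀ → M)
    (hρ : ∀ (m : M) (g : G), ρ m (g : G ⧸ MulAction.stabilizer G m₀) = (gg m * g) • m₀)
    [Finite (MulAction.stabilizer G m₀)]
    (E : Finset (G ⧸ MulAction.stabilizer G m₀))
    (hE1 : ((1 : G) : G ⧸ MulAction.stabilizer G m₀) ∈ E)
    (hE2 : ∀ F : Set M, F.Finite →
      2 * F.ncard ≤ (Set.image2 ρ F (E : Set (G ⧸ MulAction.stabilizer G m₀))).ncard) :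
    ∃ (φ : M → M) (E' : Finset (G ⧸ MulAction.stabilizer G m₀)),
      Function.Surjective φ ∧ (∀ m : M, (φ ⁻¹' {m}).ncard = 2) ∧
      ∀ m : M, ∃ e ∈ E', ρ (φ m) e = m := by
  classical
  have hρ1 : ∀ m : M, ρ m ((1 : G) : G ⧸ MulAction.stabilizer G m₀) = m := by
    intro m
    rw [hρ m 1, mul_one, hgg]
  -- Hall's theorem to get an injection M × Bool ↪ M along the graph
  set t : M × Bool → Finset M := fun a => E.image (ρ a.1) with ht
  have hall : ∀ s : Finset (M × Bool), s.card ≤ (s.biUnion t).card := by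
    intro s
    set F : Finset M := s.image Prod.fst with hFdef
    have h1 : s.card ≤ 2 * F.card := by
      have hsub : s ⊆ F ×ˢ (Finset.univ : Finset Bool) := by
        intro a ha
        rw [Finset.mem_product]
        exact ⟨Finset.mem_image_of_mem _ ha, Finset.mem_univ _⟩
      calc s.card ≤ (F ×ˢ (Finset.univ : Finset Bool)).card := Finset.card_le_card hsub
        _ = 2 * F.card := by rw [Finset.card_product]; simp [mul_comm]
    have h2 : 2 * (↑F : Set M).ncard ≤
        (Set.image2 ρ (↑F) (↑E : Set (G ⧸ MulAction.stabilizer G m₀))).ncard :=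
      hE2 _ (F.finite_toSet)
    have h3 : Set.image2 ρ (↑F) (↑E : Set (G ⧸ MulAction.stabilizer G m₀)) ⊆
        ↑(s.biUnion t) := by
      rintro x ⟨m, hm, e, he, rfl⟩
      rw [Finset.coe_image] at hm
      obtain ⟨a, ha, rfl⟩ := hm
      simp only [Finset.coe_biUnion, Set.mem_iUnion]
      exact ⟨a, ha, by simp only [ht, Finset.coe_image]; exact ⟨e, he, rfl⟩⟩
    have h4 : (Set.image2 ρ (↑F) (↑E : Set (G ⧸ MulAction.stabilizer G m₀))).ncard ≤
        (s.biUnion t).card := by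
      rw [← Set.ncard_coe_finset]
      exact Set.ncard_le_ncard h3 (s.biUnion t).finite_toSet
    rw [Set.ncard_coe_finset] at h2
    omega
  obtain ⟨f, hfinj, hft⟩ := (Finset.all_card_le_biUnion_card_iff_exists_injective t).1 hall
  -- reverse injection
  set g : M → M × Bool := fun m => (m, false) with hgdef
  have hginj : Function.Injective g := fun a b h => by
    simpa [hgdef] using congrArg Prod.fst h
  -- the relation
  set R : M × Bool → M → Prop := fun a m' => ∃ e ∈ E, ρ a.1 e = m' with hRdef
  have hRf : ∀ a, R a (f a) := by
    intro a
    have := hft a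
    simp only [ht, Finset.mem_image] at this
    obtain ⟨e, he, hee⟩ := this
    exact ⟨e, he, hee⟩
  have hRg : ∀ m : M, R (g m) m := fun m => ⟨_, hE1, hρ1 m⟩
  obtain ⟨h, hb, hR⟩ := csb_rel R f g hfinj hginj hRf hRg
  set eqv := Equiv.ofBijective h hb with heqv
  refine ⟨fun m' => (eqv.symm m').1, E, ?_, ?_, ?_⟩
  · intro m
    exact ⟨h (m, false), by simp [heqv, Equiv.ofBijective_symm_apply_apply]⟩
  · intro m
    have : (fun m' => (eqv.symm m').1) ⁻¹' {m} = {h (m, false), h (m, true)} := by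
      ext m'
      simp only [Set.mem_preimage, Set.mem_singleton_iff, Set.mem_insert_iff]
      constructor
      · intro hm
        have : eqv.symm m' = (m, false) ∨ eqv.symm m' = (m, true) := by
          rcases Bool.eq_false_or_eq_true (eqv.symm m').2 with h2 | h2
          · right; rw [← hm, ← h2]
          · left; rw [← hm, ← h2]
        rcases this with h' | h'
        · left
          have := congrArg eqv h'
          simpa [heqv] using this
        · right
          have := congrArg eqv h'
          simpa [heqv] using this
      · rintro (rfl | rfl) <;>
          simp [heqv, Equiv.ofBijective_symm_apply_apply]
    rw [this]
    refine Set.ncard_pair ?_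
    intro he
    have := hb.1 he
    simp at this
  · intro m'
    obtain ⟨e, he, hee⟩ := hR (eqv.symm m')
    refine ⟨e, he, ?_⟩
    have : h (eqv.symm m') = m' := eqv.apply_symm_apply m'
    rwa [this] at hee
end

section
/- Let the right semi-action ⇀ be free (for each m ∈ M the map 𝔤 ↦ m ⇀ 𝔤 is injective), and suppose there is a 2-to-1 surjective map φ : M → M and a finite subset E of G/G₀ such that for each m ∈ M there is e ∈ E with φ(m) ⇀ e = m. Then there exists a right paradoxical decomposition: families (A_e)_{e∈E}, (B_e)_{e∈E} of subsets of M with ⇀e injective on A_e and B_e for each e, M = ⨆_e A_e = ⨆_e B_e, and M = (⨆_e A_e ⇀ e) ⊔ (⨆_e B_e ⇀ e). -/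
theorem stmt17 {G M : Type*} [Group G] [MulAction G M]
    (htrans : ∀ m mp : M, ∃ g : G, g • m = mp)
    (m₀ : M) (gg : M → G) (hgg : ∀ m, gg m • m₀ = m)
    (ρ : M → G ⧸ MulAction.stabilizer G m₀ → M)
    (hρ : ∀ (m : M) (g : G), ρ m (g : G ⧸ MulAction.stabilizer G m₀) = (gg m * g) • m₀)
    (hfree : ∀ m : M, Function.Injective (ρ m))
    (φ : M → M) (hsurj : Function.Surjective φ)
    (hfib : ∀ m : M, (φ ⁻¹' {m}).ncard = 2)
    (E : Finset (G ⧸ MulAction.stabilizer G m₀))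
    (hmatch : ∀ m : M, ∃ e ∈ E, ρ (φ m) e = m) :
    ∃ A B : G ⧸ MulAction.stabilizer G m₀ → Set M,
      (∀ e ∈ E, Set.InjOn (fun m => ρ m e) (A e) ∧ Set.InjOn (fun m => ρ m e) (B e)) ∧
      (⋃ e ∈ E, A e) = Set.univ ∧
      (E : Set (G ⧸ MulAction.stabilizer G m₀)).PairwiseDisjoint A ∧
      (⋃ e ∈ E, B e) = Set.univ ∧
      (E : Set (G ⧸ MulAction.stabilizer G m₀)).PairwiseDisjoint B ∧
      ((⋃ e ∈ E, (fun a => ρ a e) '' A e) ∪ (⋃ e ∈ E, (fun a => ρ a e) '' B e))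
        = Set.univ ∧
      (E : Set (G ⧸ MulAction.stabilizer G m₀)).PairwiseDisjoint
        (fun e => (fun a => ρ a e) '' A e) ∧
      (E : Set (G ⧸ MulAction.stabilizer G m₀)).PairwiseDisjoint
        (fun e => (fun a => ρ a e) '' B e) ∧
      Disjoint (⋃ e ∈ E, (fun a => ρ a e) '' A e)
        (⋃ e ∈ E, (fun a => ρ a e) '' B e) := by
  classical
  -- choose the two elements of each fibre
  have h2 : ∀ m : M, ∃ p : M × M, p.1 ≠ p.2 ∧ φ ⁻¹' {m} = {p.1, p.2} := by
    intro m
    obtain ⟨a, b, hab, h⟩ := Set.ncard_eq_two.mp (hfib m)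
    exact ⟨(a, b), hab, h⟩
  choose p hne hset using h2
  set ψ : M → M := fun m => (p m).1 with hψ
  set ψ' : M → M := fun m => (p m).2 with hψ'
  have hφψ : ∀ m, φ (ψ m) = m := by
    intro m
    have : ψ m ∈ φ ⁻¹' {m} := by rw [hset]; exact Set.mem_insert _ _
    simpa using this
  have hφψ' : ∀ m, φ (ψ' m) = m := by
    intro m
    have : ψ' m ∈ φ ⁻¹' {m} := by rw [hset]; exact Set.mem_insert_of_mem _ rfl
    simpa using this
  have hψinj : Function.Injective ψ := by
    intro a b h
    have := congrArg φ h
    rwa [hφψ, hφψ] at this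
  have hψ'inj : Function.Injective ψ' := by
    intro a b h
    have := congrArg φ h
    rwa [hφψ', hφψ'] at this
  have hψne : ∀ m m', ψ m ≠ ψ' m' := by
    intro m m' h
    have h2 := congrArg φ h
    rw [hφψ, hφψ'] at h2
    subst h2
    exact hne m h
  have hcover : ∀ x : M, x = ψ (φ x) ∨ x = ψ' (φ x) := by
    intro x
    have : x ∈ φ ⁻¹' {φ x} := rfl
    rw [hset] at this
    exact this
  -- choose the e's
  have he1 : ∀ m : M, ∃ e ∈ E, ρ m e = ψ m := by
    intro m
    obtain ⟨e, heE, he⟩ := hmatch (ψ m)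
    rw [hφψ] at he
    exact ⟨e, heE, he⟩
  have he2 : ∀ m : M, ∃ e ∈ E, ρ m e = ψ' m := by
    intro m
    obtain ⟨e, heE, he⟩ := hmatch (ψ' m)
    rw [hφψ'] at he
    exact ⟨e, heE, he⟩
  choose e₁ he₁E he₁ using he1
  choose e₂ he₂E he₂ using he2
  refine ⟨fun e => {m | e₁ m = e}, fun e => {m | e₂ m = e}, ?_, ?_, ?_, ?_, ?_, ?_, ?_, ?_, ?_⟩
  · intro e _
    constructor
    · intro a ha b hb h
      simp only [Set.mem_setOf_eq] at ha hb
      apply hψinj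
      rw [← he₁ a, ← he₁ b, ha, hb]
      exact h
    · intro a ha b hb h
      simp only [Set.mem_setOf_eq] at ha hb
      apply hψ'inj
      rw [← he₂ a, ← he₂ b, ha, hb]
      exact h
  · ext m
    simp only [Set.mem_iUnion, Set.mem_setOf_eq, Set.mem_univ, iff_true]
    exact ⟨e₁ m, he₁E m, rfl⟩
  · intro e _ e' _ hee
    apply Set.disjoint_left.mpr
    intro m hm hm'
    exact hee (hm.symm.trans hm')
  · ext m
    simp only [Set.mem_iUnion, Set.mem_setOf_eq, Set.mem_univ, iff_true]
    exact ⟨e₂ m, he₂E m, rfl⟩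
  · intro e _ e' _ hee
    apply Set.disjoint_left.mpr
    intro m hm hm'
    exact hee (hm.symm.trans hm')
  · ext x
    simp only [Set.mem_union, Set.mem_iUnion, Set.mem_image, Set.mem_setOf_eq, Set.mem_univ,
      iff_true]
    rcases hcover x with h | h
    · exact Or.inl ⟨e₁ (φ x), he₁E _, φ x, rfl, by rw [he₁, ← h]⟩
    · exact Or.inr ⟨e₂ (φ x), he₂E _, φ x, rfl, by rw [he₂, ← h]⟩
  · intro e _ e' _ hee
    apply Set.disjoint_left.mpr
    rintro x ⟨m, hm, rfl⟩ ⟨m', hm', hx⟩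
    simp only [Set.mem_setOf_eq] at hm hm'
    subst hm; subst hm'
    have hx' : ρ m' (e₁ m') = ρ m (e₁ m) := hx
    rw [he₁, he₁] at hx'
    have := hψinj hx'
    subst this
    exact hee rfl
  · intro e _ e' _ hee
    apply Set.disjoint_left.mpr
    rintro x ⟨m, hm, rfl⟩ ⟨m', hm', hx⟩
    simp only [Set.mem_setOf_eq] at hm hm'
    subst hm; subst hm'
    have hx' : ρ m' (e₂ m') = ρ m (e₂ m) := hx
    rw [he₂, he₂] at hx'
    have := hψ'inj hx'
    subst this
    exact hee rfl
  · apply Set.disjoint_left.mpr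
    rintro x hx hx'
    simp only [Set.mem_iUnion, Set.mem_image, Set.mem_setOf_eq] at hx hx'
    obtain ⟨e, _, m, hm, hxm⟩ := hx
    obtain ⟨e', _, m', hm', hxm'⟩ := hx'
    subst hm; subst hm'
    rw [he₁] at hxm
    rw [he₂] at hxm'
    exact hψne m m' (hxm.trans hxm'.symm)
end

section
/- Let M be a set with a transitive left G-action, H ≤ G with G = G₀H, where G₀ is the stabiliser of m₀ and the restricted action of H on M is free, and suppose the coordinates g_{m₀,m} all lie in the centre Z(H) of H. Then for every g ∈ G the map m ↦ m ⇀ gG₀ is injective, and for every h ∈ H and m ∈ M we have m ⇀ hG₀ = h • m and (m ⇀ hG₀) ⇀ gG₀ = m ⇀ hgG₀. -/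
theorem stmt19 {G M : Type*} [Group G] [MulAction G M]
    (htrans : ∀ m mp : M, ∃ g : G, g • m = mp)
    (m₀ : M) (gg : M → G) (hgg : ∀ m, gg m • m₀ = m)
    (ρ : M → G ⧸ MulAction.stabilizer G m₀ → M)
    (hρ : ∀ (m : M) (g : G), ρ m (g : G ⧸ MulAction.stabilizer G m₀) = (gg m * g) • m₀)
    (H : Subgroup G)
    (hGH : ∀ g : G, ∃ g₀ ∈ MulAction.stabilizer G m₀, ∃ h ∈ H, g = g₀ * h)
    (hfree : ∀ m : M, Function.Injective (fun h : H => (h : G) • m))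
    (hZ : ∀ m : M, gg m ∈ H ∧ ∀ h ∈ H, gg m * h = h * gg m) :
    (∀ g : G, Function.Injective
      (fun m => ρ m (g : G ⧸ MulAction.stabilizer G m₀))) ∧
    (∀ h ∈ H, (∀ m : M, ρ m (h : G ⧸ MulAction.stabilizer G m₀) = h • m) ∧
      ∀ g : G, ∀ m : M,
        ρ (ρ m (h : G ⧸ MulAction.stabilizer G m₀)) (g : G ⧸ MulAction.stabilizer G m₀)
          = ρ m ((h * g : G) : G ⧸ MulAction.stabilizer G m₀)) := by
  constructor
  · intro g m m' hmm
    simp only [hρ, mul_smul] at hmm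
    have h2 : (⟨gg m, (hZ m).1⟩ : H) = ⟨gg m', (hZ m').1⟩ := hfree (g • m₀) hmm
    have h3 : gg m = gg m' := congrArg Subtype.val h2
    rw [← hgg m, ← hgg m', h3]
  · intro h hh
    have key : ∀ m : M, ρ m ((h : G) : G ⧸ MulAction.stabilizer G m₀) = h • m := by
      intro m
      rw [hρ, (hZ m).2 h hh, mul_smul, hgg]
    refine ⟨key, fun g m => ?_⟩
    have e1 : ((⟨gg (h • m), (hZ _).1⟩ : H) : G) • m₀
        = ((⟨gg m * h, mul_mem (hZ m).1 hh⟩ : H) : G) • m₀ := by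
      simp only [hgg, (hZ m).2 h hh, mul_smul, hgg]
    have e2 : gg (h • m) = gg m * h := congrArg Subtype.val (hfree m₀ e1)
    rw [key m, hρ, hρ, e2, mul_assoc]
end
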